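/- arXiv:cs/0403008 — 5 statements merged into one kernel-verified Lean document; each statement's English description precedes it below -/
import Mathlib

section
/- Let t be transcendental over an algebraically closed field K̄, H₁,…,H_k symmetric n×n matrices over K, and D_j = diag(1^{j-1},…,n^{j-1}). Then for every field F containing K(t) and every 0 ≠ y ∈ F̄^k, the rank of ∑_{j=1}^k y_j (H_j + t·D_j) is at least n-k+1. -/
open Matrix

/-- Selecting rows and columns of a square matrix cannot increase the rank. -/
lemma aux_rank_submatrix_le {F : Type*} [Field F] {r n : ℕ}
    (A : Matrix (Fin n) (Fin n) F) (f : Fin r → Fin n) :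
    (A.submatrix f f).rank ≤ A.rank := by
  have h1 : (Matrix.of fun (i : Fin r) (l : Fin n) => if f i = l then (1 : F) else 0) * A
      = A.submatrix f id := by
    ext i j
    simp [Matrix.mul_apply, ite_mul]
  have h2 : A.submatrix f id *
      (Matrix.of fun (l : Fin n) (j : Fin r) => if l = f j then (1 : F) else 0)
      = A.submatrix f f := by
    ext i j
    simp [Matrix.mul_apply, mul_ite]
  calc (A.submatrix f f).rank
      = (A.submatrix f id *
          (Matrix.of fun (l : Fin n) (j : Fin r) => if l = f j then (1 : F) else 0)).rank := by
        rw [h2]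
    _ ≤ (A.submatrix f id).rank := Matrix.rank_mul_le_left _ _
    _ = ((Matrix.of fun (i : Fin r) (l : Fin n) => if f i = l then (1 : F) else 0) * A).rank := by
        rw [h1]
    _ ≤ A.rank := Matrix.rank_mul_le_right _ _

/-- Multiplying a matrix by a nonzero scalar does not change the rank. -/
lemma aux_rank_smul {F : Type*} [Field F] {m n : ℕ} (c : F) (hc : c ≠ 0)
    (A : Matrix (Fin m) (Fin n) F) : (c • A).rank = A.rank := by
  rw [Matrix.smul_eq_diagonal_mul]
  exact Matrix.rank_mul_eq_right_of_isUnit_det _ _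
    (by simp [Matrix.det_diagonal, hc])

set_option maxHeartbeats 1000000 in
/-- Lemma 9: for `t` transcendental over `K`, symmetric matrices `H_j` over `K` and
`D_j = diag(1^(j-1),…,n^(j-1))`, every nonzero combination
`∑_j y_j (H_j + t·D_j)` over an algebraically closed field `F ⊇ K(t)` has rank
at least `n-k+1`. -/
theorem stmt7 {K F : Type*} [Field K] [CharZero K] [Field F] [Algebra K F] [IsAlgClosed F]
    {n k : ℕ} (hk : 1 ≤ k) (hkn : k ≤ n)
    (t : F) (ht : Transcendental K t)
    (H : Fin k → Matrix (Fin n) (Fin n) K) (hH : ∀ j, (H j).IsSymm)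
    (y : Fin k → F) (hy : y ≠ 0) :
    n - k + 1 ≤
      (∑ j : Fin k, y j •
        ((H j).map (algebraMap K F) +
          t • Matrix.diagonal (fun i : Fin n => ((i : ℕ) + 1 : F) ^ (j : ℕ)))).rank := by
  classical
  -- basic facts about `t`
  have ht0 : t ≠ 0 := by
    rintro rfl; exact ht isAlgebraic_zero
  have hti : Transcendental K t⁻¹ := fun h => ht (IsAlgebraic.inv_iff.mp h)
  -- construct a valuation subring of `F` containing `K` in which `t⁻¹` is a nonunit
  set P : Ideal (Polynomial K) := Ideal.span {Polynomial.X} with hP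
  have hPprime : P.IsPrime :=
    (Ideal.span_singleton_prime Polynomial.X_ne_zero).mpr Polynomial.prime_X
  set g0 : Polynomial K →+* F := (Polynomial.aeval t⁻¹).toRingHom with hg0
  have hg : ∀ c : P.primeCompl, IsUnit (g0 c) := by
    rintro ⟨c, hc⟩
    refine isUnit_iff_ne_zero.mpr fun h0 => ?_
    have hc0 : c = 0 := transcendental_iff.mp hti c h0
    exact hc (hc0 ▸ P.zero_mem)
  letI : P.IsPrime := hPprime
  set g : Localization.AtPrime P →+* F := IsLocalization.lift hg with hgdef
  obtain ⟨A, hA, hloc⟩ := IsLocalRing.exists_factor_valuationRing g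
  have hgX : g (algebraMap (Polynomial K) (Localization.AtPrime P) Polynomial.X) = t⁻¹ := by
    rw [hgdef, IsLocalization.lift_eq]; simp [hg0]
  have hgC : ∀ c : K, g (algebraMap (Polynomial K) (Localization.AtPrime P) (Polynomial.C c))
      = algebraMap K F c := by
    intro c; rw [hgdef, IsLocalization.lift_eq]; simp [hg0]
  have hK : ∀ c : K, algebraMap K F c ∈ A := fun c => (hgC c) ▸ hA _
  have hs : t⁻¹ ∈ A := hgX ▸ hA _
  set sA : A := ⟨t⁻¹, hs⟩ with hsA
  have hsnu : ¬ IsUnit sA := by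
    intro hu
    have heq : g.codRestrict A.toSubring hA
        (algebraMap (Polynomial K) (Localization.AtPrime P) Polynomial.X) = sA :=
      Subtype.ext hgX
    have : IsUnit (algebraMap (Polynomial K) (Localization.AtPrime P) Polynomial.X) :=
      hloc.1 _ (heq ▸ hu)
    have hX : Polynomial.X ∈ P := Ideal.mem_span_singleton_self _
    exact ((IsLocalization.AtPrime.isUnit_to_map_iff (Localization.AtPrime P) P
      Polynomial.X).mp this) hX
  -- the residue field
  set Rf := IsLocalRing.ResidueField A with hRf
  set φ : A →+* Rf := IsLocalRing.residue A with hφ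
  have hres : φ sA = 0 :=
    (IsLocalRing.residue_eq_zero_iff _).mpr ((IsLocalRing.mem_maximalIdeal sA).mpr hsnu)
  -- `K` embeds in `A` and in `Rf`
  set ψ : K →+* A := (algebraMap K F).codRestrict A.toSubring hK with hψ
  haveI : CharZero Rf := RingHom.charZero_iff (RingHom.injective (φ.comp ψ)) |>.mp inferInstance
  -- normalize `y`
  obtain ⟨m, -, hm⟩ := Finset.exists_max_image Finset.univ (fun j => A.valuation (y j))
    ⟨⟨0, hk⟩, Finset.mem_univ _⟩
  obtain ⟨j0, hj0⟩ := Function.ne_iff.mp hy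
  have hym : y m ≠ 0 := by
    intro h
    have h1 := hm j0 (Finset.mem_univ _)
    rw [h, map_zero, le_zero_iff] at h1
    exact hj0 (by simpa using (A.valuation.zero_iff.mp h1))
  have hzmem : ∀ j, y j / y m ∈ A := by
    intro j
    refine A.mem_of_valuation_le_one _ ?_
    rw [map_div₀]
    have hvm : (0 : A.ValueGroup) < A.valuation (y m) := by
      rw [zero_lt_iff]; simpa using hym
    exact (div_le_one₀ hvm).mpr (hm j (Finset.mem_univ _))
  set z : Fin k → A := fun j => ⟨y j / y m, hzmem j⟩ with hz
  have hzm : z m = 1 := Subtype.ext (div_self hym)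
  -- the matrix over `A`
  set N : Matrix (Fin n) (Fin n) A := ∑ j : Fin k, z j •
      (sA • (H j).map ψ +
        Matrix.diagonal (fun i : Fin n => ((i : ℕ) + 1 : A) ^ (j : ℕ))) with hN
  set M : Matrix (Fin n) (Fin n) F := ∑ j : Fin k, y j •
      ((H j).map (algebraMap K F) +
        t • Matrix.diagonal (fun i : Fin n => ((i : ℕ) + 1 : F) ^ (j : ℕ))) with hM
  -- the matrix over `F` obtained from `N` is a rescaling of `M`
  have hsub : ∀ x : A, A.subtype x = (x : F) := fun _ => rfl
  have key : (y m * t) • (N.map A.subtype) = M := by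
    ext i i'
    simp only [hN, hM, Matrix.map_apply, Matrix.sum_apply, Matrix.smul_apply, Matrix.add_apply,
      Matrix.diagonal_apply, smul_eq_mul, map_sum, _root_.map_mul, _root_.map_add]
    rw [Finset.mul_sum]
    refine Finset.sum_congr rfl fun j _ => ?_
    have h1 : (A.subtype (z j) : F) = y j / y m := rfl
    have h2 : (A.subtype sA : F) = t⁻¹ := rfl
    have h3 : (A.subtype (ψ (H j i i')) : F) = algebraMap K F (H j i i') := rfl
    have h4 : (A.subtype (if i = i' then ((i : ℕ) + 1 : A) ^ (j : ℕ) else 0) : F)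
        = if i = i' then ((i : ℕ) + 1 : F) ^ (j : ℕ) else 0 := by
      split_ifs <;> push_cast <;> simp
    rw [h1, h2, h3, h4]
    split_ifs with hii
    · field_simp
    · field_simp
  -- the residue matrix is diagonal
  set q : Fin n → Rf := fun i => ∑ j : Fin k, φ (z j) * ((i : ℕ) + 1 : Rf) ^ (j : ℕ) with hq
  have hNres : N.map φ = Matrix.diagonal q := by
    ext i i'
    simp only [hN, Matrix.map_apply, Matrix.sum_apply, Matrix.smul_apply, Matrix.add_apply,
      Matrix.diagonal_apply, smul_eq_mul, map_sum, _root_.map_mul, _root_.map_add]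
    by_cases hii : i = i'
    · subst hii
      simp only [if_pos rfl, hq]
      refine Finset.sum_congr rfl fun j _ => ?_
      rw [hres]
      simp [map_pow]
    · simp only [if_neg hii]
      refine Finset.sum_eq_zero fun j _ => ?_
      rw [hres]
      simp
  -- the values `q i` are values of a nonzero polynomial of degree `< k`
  set p : Polynomial Rf := ∑ j : Fin k, Polynomial.C (φ (z j)) * Polynomial.X ^ (j : ℕ) with hp
  have hpcoeff : p.coeff (m : ℕ) = 1 := by
    rw [hp, Polynomial.finset_sum_coeff]
    rw [Finset.sum_eq_single m]
    · simp [hzm]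
    · intro j _ hj
      have : ((m : ℕ) : ℕ) ≠ (j : ℕ) := fun h => hj (Fin.ext h.symm)
      simp [Polynomial.coeff_C_mul, Polynomial.coeff_X_pow, this]
    · intro h; exact absurd (Finset.mem_univ m) h
  have hpne : p ≠ 0 := fun h => by simp [h] at hpcoeff
  have hpdeg : p.natDegree ≤ k - 1 := by
    refine Polynomial.natDegree_sum_le_of_forall_le _ _ fun j _ => ?_
    refine le_trans (Polynomial.natDegree_C_mul_le _ _) ?_
    rw [Polynomial.natDegree_X_pow]
    have := j.isLt
    omega
  have heval : ∀ i : Fin n, p.eval ((i : ℕ) + 1 : Rf) = q i := by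
    intro i
    rw [hp, hq, Polynomial.eval_finset_sum]
    simp
  -- at most `k-1` of the `q i` vanish
  have hbad : (Finset.univ.filter fun i : Fin n => q i = 0).card ≤ k - 1 := by
    have hinj : ∀ a ∈ (Finset.univ.filter fun i : Fin n => q i = 0),
        ∀ b ∈ (Finset.univ.filter fun i : Fin n => q i = 0),
        (((a : ℕ) + 1 : Rf)) = (((b : ℕ) + 1 : Rf)) → a = b := by
      intro a _ b _ hab
      have : ((a : ℕ) + 1 : ℕ) = ((b : ℕ) + 1 : ℕ) := by exact_mod_cast hab
      exact Fin.ext (by omega)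
    calc (Finset.univ.filter fun i : Fin n => q i = 0).card
        ≤ p.roots.toFinset.card := by
          refine Finset.card_le_card_of_injOn (fun i => ((i : ℕ) + 1 : Rf)) ?_ hinj
          intro i hi
          beta_reduce
          rw [Finset.mem_coe, Multiset.mem_toFinset, Polynomial.mem_roots']
          refine ⟨hpne, ?_⟩
          rw [Polynomial.IsRoot, heval]
          exact (Finset.mem_filter.mp (Finset.mem_coe.mp hi)).2
      _ ≤ Multiset.card p.roots := Multiset.toFinset_card_le _
      _ ≤ p.natDegree := Polynomial.card_roots' p
      _ ≤ k - 1 := hpdeg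
  -- choose `n-k+1` indices where `q` does not vanish
  have hcardgood : n - k + 1 ≤ (Finset.univ.filter fun i : Fin n => q i ≠ 0).card := by
    have := Finset.card_filter_add_card_filter_not
      (s := (Finset.univ : Finset (Fin n))) (p := fun i : Fin n => q i = 0)
    simp only [Finset.card_univ, Fintype.card_fin] at this
    have h2 : (Finset.univ.filter fun i : Fin n => ¬ q i = 0).card
        = (Finset.univ.filter fun i : Fin n => q i ≠ 0).card := rfl
    omega
  obtain ⟨T, hTsub, hTcard⟩ := Finset.exists_subset_card_eq hcardgood
  set f : Fin (n - k + 1) → Fin n := fun i => (T.equivFin.symm (Fin.cast hTcard.symm i) : Fin n)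
    with hf
  have hfinj : Function.Injective f := by
    intro a b hab
    have := T.equivFin.symm.injective (Subtype.ext hab)
    exact Fin.ext (by simpa using congrArg Fin.val this)
  have hfq : ∀ i, q (f i) ≠ 0 := by
    intro i
    have hmem : f i ∈ T := (T.equivFin.symm (Fin.cast hTcard.symm i)).2
    have := hTsub hmem
    exact (Finset.mem_filter.mp this).2
  -- the chosen submatrix of `N` has nonzero determinant in `A`
  have hdetA : (N.submatrix f f).det ≠ 0 := by
    intro h0
    have hφdet : φ ((N.submatrix f f).det) = ((N.map φ).submatrix f f).det := by
      rw [RingHom.map_det, RingHom.mapMatrix_apply, ← Matrix.submatrix_map]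
    rw [h0, map_zero, hNres, Matrix.submatrix_diagonal _ _ hfinj,
      Matrix.det_diagonal] at hφdet
    exact (Finset.prod_ne_zero_iff.mpr fun i _ => hfq i) hφdet.symm
  have hdetF : ((N.map A.subtype).submatrix f f).det ≠ 0 := by
    have hφdet : A.subtype ((N.submatrix f f).det) = ((N.map A.subtype).submatrix f f).det := by
      rw [RingHom.map_det, RingHom.mapMatrix_apply, ← Matrix.submatrix_map]
    intro h0
    rw [← hφdet] at h0
    exact hdetA (by
      have := h0
      rw [hsub] at this
      exact_mod_cast this)
  -- conclude
  have hrank1 : ((N.map A.subtype).submatrix f f).rank = n - k + 1 := by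
    rw [Matrix.rank_of_isUnit _ ((Matrix.isUnit_iff_isUnit_det _).mpr
      (isUnit_iff_ne_zero.mpr hdetF)), Fintype.card_fin]
  have hrank2 : (N.map A.subtype).rank = M.rank := by
    rw [← key, aux_rank_smul _ (mul_ne_zero hym ht0)]
  calc n - k + 1 = ((N.map A.subtype).submatrix f f).rank := hrank1.symm
    _ ≤ (N.map A.subtype).rank := aux_rank_submatrix_le _ _
    _ = M.rank := hrank2
end

section
/- Let f(T) ∈ F(ζ)[T] be monic, where ζ is an infinitesimal over a real closed field F, and let Z_f be the multiset of roots of f in the algebraic closure of F⟨ζ⟩. Let o(f) be the order (as a power of ζ) of the largest coefficient, and f̂(T) = lim_ζ ζ^{-o(f)} f(T). Then: (a) o(f) equals the sum over unbounded roots τ of f of μ(τ)·o(τ); (b) the zero set of f̂ in the algebraic closure of F equals lim_ζ of the set of bounded roots of f; and (c) for each root y of f̂, the multiplicity of y as a root of f̂ equals the sum of multiplicities μ(τ) over bounded roots τ of f with lim_ζ τ = y. -/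
open Polynomial

/-- Lemma 3 (extension of [BPR03, Lemma 11.37]): abstract model of the algebraic
closure `L` of the Puiseux series field `F⟨ζ⟩`, with order function `v` (additive
valuation, `v ζ = 1`, bounded ⟺ `v ≥ 0`), monomials `π q = ζ^q`, and standard-part
homomorphism `lim : {v ≥ 0} → K` (`K` the algebraic closure of `F`).
For monic `f` of degree `d` with `o(f) = U := ∑_{unbounded roots τ} μ(τ)·o(τ)` and
`f̂ = lim ζ^{-U} f`:
(a) `U` is the minimal order of a coefficient of `f`;
(b) the zero set of `f̂` equals `lim` of the set of bounded roots of `f`;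
(c) the multiplicity of each root `y` of `f̂` equals the sum of the multiplicities
of the bounded roots `τ` of `f` with `lim τ = y`. -/
theorem stmt10 {L K : Type*} [Field L] [IsAlgClosed L] [Field K] [IsAlgClosed K]
    [DecidableEq K]
    (v : L → ℚ) (hv0 : v 0 = 0)
    (hvmul : ∀ x y : L, x ≠ 0 → y ≠ 0 → v (x * y) = v x + v y)
    (hvadd : ∀ x y : L, x ≠ 0 → y ≠ 0 → x + y ≠ 0 → min (v x) (v y) ≤ v (x + y))
    (pi : ℚ → L) (hpine : ∀ q, pi q ≠ 0) (hpiadd : ∀ q r, pi (q + r) = pi q * pi r)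
    (hpiv : ∀ q, v (pi q) = q)
    (lim : L → K) (hlim0 : lim 0 = 0) (hlim1 : lim 1 = 1)
    (hlimadd : ∀ x y : L, 0 ≤ v x → 0 ≤ v y → lim (x + y) = lim x + lim y)
    (hlimmul : ∀ x y : L, 0 ≤ v x → 0 ≤ v y → lim (x * y) = lim x * lim y)
    (hlimpos : ∀ x : L, x ≠ 0 → 0 < v x → lim x = 0)
    (hlimne : ∀ x : L, x ≠ 0 → v x = 0 → lim x ≠ 0)
    (f : Polynomial L) (hf : f.Monic) (d : ℕ) (hd : f.natDegree = d)
    (U : ℚ) (hU : U = ((f.roots.filter (fun τ => v τ < 0)).map v).sum)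
    (fhat : Polynomial K)
    (hfhat : fhat = ∑ j ∈ Finset.range (d + 1),
        C (lim (pi (-U) * f.coeff j)) * X ^ j) :
    ((∀ j, f.coeff j ≠ 0 → U ≤ v (f.coeff j)) ∧
      (∃ j ≤ d, f.coeff j ≠ 0 ∧ v (f.coeff j) = U)) ∧
    {y : K | fhat.eval y = 0} = lim '' {τ : L | τ ∈ f.roots ∧ 0 ≤ v τ} ∧
    (∀ y : K, fhat.rootMultiplicity y
        = Multiset.card ((f.roots.filter (fun τ => 0 ≤ v τ)).filter
            (fun τ => lim τ = y))) := by
  -- basic valuation / pi / lim facts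
  have hv1 : v 1 = 0 := by
    have h := hvmul 1 1 one_ne_zero one_ne_zero
    rw [one_mul] at h; linarith
  have hvneg1 : v (-1 : L) = 0 := by
    have h := hvmul (-1) (-1) (by norm_num) (by norm_num)
    rw [neg_mul_neg, one_mul, hv1] at h; linarith
  have hvneg : ∀ x : L, x ≠ 0 → v (-x) = v x := by
    intro x hx
    have h := hvmul (-1) x (by norm_num) hx
    rw [neg_one_mul] at h
    rw [h, hvneg1, zero_add]
  have hpi0 : pi 0 = 1 := by
    have h := hpiadd 0 0
    rw [add_zero] at h
    have h2 : pi 0 * 1 = pi 0 * pi 0 := by rw [mul_one]; exact h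
    exact (mul_left_cancel₀ (hpine 0) h2).symm
  have hpisum : ∀ s : Multiset ℚ, pi s.sum = (s.map pi).prod := by
    intro s
    induction s using Multiset.induction_on with
    | empty => simp [hpi0]
    | cons a s ih => simp [Multiset.sum_cons, hpiadd, ih]
  -- the valuation subring
  let O : Subring L :=
    { carrier := {x | 0 ≤ v x}
      zero_mem' := by simp [hv0]
      one_mem' := by simp [hv1]
      add_mem' := by
        rintro a b (ha : 0 ≤ v a) (hb : 0 ≤ v b)
        show 0 ≤ v (a + b)
        rcases eq_or_ne a 0 with rfl | ha0
        · simpa using hb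
        rcases eq_or_ne b 0 with rfl | hb0
        · simpa using ha
        rcases eq_or_ne (a + b) 0 with h | hab
        · rw [h, hv0]
        · exact le_trans (le_min ha hb) (hvadd a b ha0 hb0 hab)
      mul_mem' := by
        rintro a b (ha : 0 ≤ v a) (hb : 0 ≤ v b)
        show 0 ≤ v (a * b)
        rcases eq_or_ne a 0 with rfl | ha0
        · simp [hv0]
        rcases eq_or_ne b 0 with rfl | hb0
        · simp [hv0]
        rw [hvmul a b ha0 hb0]; exact add_nonneg ha hb
      neg_mem' := by
        rintro a (ha : 0 ≤ v a)
        show 0 ≤ v (-a)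
        rcases eq_or_ne a 0 with rfl | ha0
        · simp [hv0]
        · rw [hvneg a ha0]; exact ha }
  have hmemO : ∀ x : L, x ∈ O ↔ 0 ≤ v x := fun x => Iff.rfl
  let φ : O →+* K :=
    { toFun := fun x => lim x.1
      map_one' := hlim1
      map_mul' := fun a b => hlimmul a.1 b.1 a.2 b.2
      map_zero' := hlim0
      map_add' := fun a b => hlimadd a.1 b.1 a.2 b.2 }
  have hφval : ∀ x : O, φ x = lim x.1 := fun x => rfl
    -- split roots into bounded and unbounded
  set Z := f.roots with hZ
  set B := Z.filter (fun τ => 0 ≤ v τ) with hB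
  set N := Z.filter (fun τ => v τ < 0) with hN
  have hNB : N + B = Z := by
    have hBalt : Z.filter (fun τ => ¬ v τ < 0) = B := by
      rw [hB]; exact Multiset.filter_congr (fun x _ => not_lt)
    rw [← hBalt]
    exact Multiset.filter_add_not _ _
  have hBmem : ∀ τ ∈ B, τ ∈ O := fun τ h => (Multiset.mem_filter.mp h).2
  have hNv : ∀ τ ∈ N, v τ < 0 := fun τ h => (Multiset.mem_filter.mp h).2
  have hNne : ∀ τ ∈ N, τ ≠ 0 := by
    intro τ h h0
    have := hNv τ h
    rw [h0, hv0] at this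
    exact lt_irrefl 0 this
  -- the model polynomial over O
  let linB : {x // x ∈ B} → Polynomial O := fun τ =>
    X - C ⟨τ.1, hBmem τ.1 τ.2⟩
  let linN : {x // x ∈ N} → Polynomial O := fun τ =>
    C ⟨pi (-v τ.1), by
        show 0 ≤ v (pi (-v τ.1)); rw [hpiv]; linarith [hNv τ.1 τ.2]⟩ * X
      - C ⟨pi (-v τ.1) * τ.1, by
        show 0 ≤ v (pi (-v τ.1) * τ.1)
        rw [hvmul _ _ (hpine _) (hNne τ.1 τ.2), hpiv]
        linarith [hNv τ.1 τ.2]⟩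
  let gO : Polynomial O := (B.attach.map linB).prod * (N.attach.map linN).prod
  have hsumneg : ∀ s : Multiset L, (s.map (fun τ => -v τ)).sum = -((s.map v).sum) := by
    intro s
    induction s using Multiset.induction_on with
    | empty => simp
    | cons a s ih => simp [Multiset.sum_cons, ih]; ring
  have h1 : gO.map O.subtype = C (pi (-U)) * f := by
    have hfsplit : f = (Z.map (fun a => X - C a)).prod :=
      (IsAlgClosed.splits f).eq_prod_roots_of_monic hf
    have e1 : (B.attach.map linB).map (Polynomial.map O.subtype)
        = B.map (fun τ => X - C τ) := by
      rw [Multiset.map_map]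
      rw [show (Polynomial.map O.subtype ∘ linB)
          = (fun τ : L => X - C τ) ∘ Subtype.val from funext fun τ => by
        show (linB τ).map O.subtype = X - C τ.1
        simp only [linB, Polynomial.map_sub, Polynomial.map_C, Polynomial.map_X]
        rfl]
      rw [← Multiset.map_map, Multiset.attach_map_val]
    have e2 : (N.attach.map linN).map (Polynomial.map O.subtype)
        = N.map (fun τ => C (pi (-v τ)) * (X - C τ)) := by
      rw [Multiset.map_map]
      rw [show (Polynomial.map O.subtype ∘ linN)
          = (fun τ : L => C (pi (-v τ)) * (X - C τ)) ∘ Subtype.val from funext fun τ => by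
        show (linN τ).map O.subtype = C (pi (-v τ.1)) * (X - C τ.1)
        rw [mul_sub, ← C_mul]
        simp only [linN, Polynomial.map_sub, Polynomial.map_mul, Polynomial.map_C,
          Polynomial.map_X]
        rfl]
      rw [← Multiset.map_map, Multiset.attach_map_val]
    have e3 : (N.map (fun τ => (C (pi (-v τ)) : Polynomial L))).prod = C (pi (-U)) := by
      have e3a : (N.map (fun τ => (C (pi (-v τ)) : Polynomial L)))
          = (N.map (fun τ => pi (-v τ))).map C := by
        rw [Multiset.map_map]; rfl
      have e3b : (N.map (fun τ => pi (-v τ)))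
          = (N.map (fun τ => -v τ)).map pi := by
        rw [Multiset.map_map]; rfl
      rw [e3a, ← map_multiset_prod (C : L →+* Polynomial L), e3b, ← hpisum,
        hsumneg, hU]
    rw [Polynomial.map_mul, Polynomial.map_multiset_prod, Polynomial.map_multiset_prod,
      e1, e2, Multiset.prod_map_mul, e3, hfsplit, ← hNB, Multiset.map_add,
      Multiset.prod_add]
    ring
    -- the limit of the N-part constants
  set c : K := (N.map (fun τ => -lim (pi (-v τ) * τ))).prod with hc
  have hbval : ∀ τ ∈ N, v (pi (-v τ) * τ) = 0 := by
    intro τ hτ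
    rw [hvmul _ _ (hpine _) (hNne τ hτ), hpiv]; ring
  have hbne : ∀ τ ∈ N, pi (-v τ) * τ ≠ 0 := fun τ hτ =>
    mul_ne_zero (hpine _) (hNne τ hτ)
  have hc0 : c ≠ 0 := by
    rw [hc]
    apply Multiset.prod_ne_zero
    intro h0
    obtain ⟨τ, hτ, heq⟩ := Multiset.mem_map.mp h0
    exact hlimne _ (hbne τ hτ) (hbval τ hτ) (neg_eq_zero.mp heq)
  have h2 : gO.map φ = C c * (B.map (fun τ => X - C (lim τ))).prod := by
    have e1 : (B.attach.map linB).map (Polynomial.map φ)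
        = B.map (fun τ => X - C (lim τ)) := by
      rw [Multiset.map_map]
      rw [show (Polynomial.map φ ∘ linB)
          = (fun τ : L => X - C (lim τ)) ∘ Subtype.val from funext fun τ => by
        show (linB τ).map φ = X - C (lim τ.1)
        simp only [linB, Polynomial.map_sub, Polynomial.map_C, Polynomial.map_X]
        rfl]
      rw [← Multiset.map_map, Multiset.attach_map_val]
    have e2 : (N.attach.map linN).map (Polynomial.map φ)
        = N.map (fun τ => C (-lim (pi (-v τ) * τ))) := by
      rw [Multiset.map_map]
      rw [show (Polynomial.map φ ∘ linN)
          = (fun τ : L => (C (-lim (pi (-v τ) * τ)) : Polynomial K)) ∘ Subtype.val from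
          funext fun τ => by
        show (linN τ).map φ = C (-lim (pi (-v τ.1) * τ.1))
        have hz : φ ⟨pi (-v τ.1), by
            show 0 ≤ v (pi (-v τ.1)); rw [hpiv]; linarith [hNv τ.1 τ.2]⟩ = 0 := by
          rw [hφval]
          exact hlimpos _ (hpine _) (by rw [hpiv]; linarith [hNv τ.1 τ.2])
        simp only [linN, Polynomial.map_sub, Polynomial.map_mul, Polynomial.map_C,
          Polynomial.map_X]
        rw [hz, map_zero, zero_mul, zero_sub, ← C_neg]
        rfl]
      rw [← Multiset.map_map, Multiset.attach_map_val]
    have e3 : (N.map (fun τ => (C (-lim (pi (-v τ) * τ)) : Polynomial K))).prod = C c := by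
      have : (N.map (fun τ => (C (-lim (pi (-v τ) * τ)) : Polynomial K)))
          = (N.map (fun τ => -lim (pi (-v τ) * τ))).map C := by
        rw [Multiset.map_map]; rfl
      rw [this, ← map_multiset_prod (C : K →+* Polynomial K), hc]
    rw [Polynomial.map_mul, Polynomial.map_multiset_prod, Polynomial.map_multiset_prod,
      e1, e2, e3]
    ring
  -- coefficients of gO
  have hcoeffg : ∀ n, ((gO.coeff n : O) : L) = pi (-U) * f.coeff n := by
    intro n
    have h := congrArg (fun p => Polynomial.coeff p n) h1
    simpa [Polynomial.coeff_map, Polynomial.coeff_C_mul] using h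
  have hφc : ∀ n, (gO.map φ).coeff n = lim (pi (-U) * f.coeff n) := by
    intro n
    rw [Polynomial.coeff_map, hφval, hcoeffg]
  have h3 : fhat = gO.map φ := by
    ext n
    rw [hfhat, hφc]
    simp only [Polynomial.finset_sum_coeff, Polynomial.coeff_C_mul, Polynomial.coeff_X_pow,
      mul_ite, mul_one, mul_zero, Finset.sum_ite_eq]
    by_cases hn : n ∈ Finset.range (d + 1)
    · simp [hn]
    · simp only [hn, if_false]
      have hn' : f.natDegree < n := by
        rw [hd]
        have := Finset.mem_range.not.mp hn
        omega
      rw [Polynomial.coeff_eq_zero_of_natDegree_lt hn', mul_zero, hlim0]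
  have h3fact : fhat = C c * (B.map (fun τ => X - C (lim τ))).prod := by
    rw [h3, h2]
  have hroots : fhat.roots = B.map lim := by
    rw [h3fact]
    have hre : B.map (fun τ => (X : Polynomial K) - C (lim τ))
        = (B.map lim).map (fun z => X - C z) := by
      rw [Multiset.map_map]; rfl
    rw [roots_C_mul _ hc0, hre, roots_multiset_prod_X_sub_C]
  have hgOmem : ∀ j, 0 ≤ v (pi (-U) * f.coeff j) := by
    intro j
    have h := (gO.coeff j).2
    rw [← hcoeffg j]
    exact h
  refine ⟨⟨?_, ?_⟩, ?_, ?_⟩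
  · -- (a): U is a lower bound on coefficient orders
    intro j hj
    have h0 := hgOmem j
    rw [hvmul _ _ (hpine _) hj, hpiv] at h0
    linarith
  · -- (a): the bound U is attained
    have hPm : ((B.map (fun τ => (X : Polynomial K) - C (lim τ))).prod).Monic :=
      monic_multiset_prod_of_monic _ _ (fun τ _ => monic_X_sub_C _)
    have hfhatne : fhat ≠ 0 := by
      rw [h3fact]
      exact mul_ne_zero (by simpa using hc0) hPm.ne_zero
    have hdeg : fhat.natDegree ≤ d := by
      rw [hfhat]
      apply natDegree_sum_le_of_forall_le
      intro j hj
      refine le_trans (natDegree_C_mul_le _ _) ?_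
      rw [natDegree_X_pow]
      exact Nat.lt_succ_iff.mp (Finset.mem_range.mp hj)
    set j := fhat.natDegree with hjdef
    have hne : fhat.coeff j ≠ 0 := by
      have := Polynomial.leadingCoeff_ne_zero.mpr hfhatne
      rwa [Polynomial.leadingCoeff] at this
    have hcj : fhat.coeff j = lim (pi (-U) * f.coeff j) := by
      rw [h3]; exact hφc j
    have hne' : pi (-U) * f.coeff j ≠ 0 := by
      intro h
      rw [hcj, h, hlim0] at hne; exact hne rfl
    have hfj : f.coeff j ≠ 0 := by
      intro h; rw [h, mul_zero] at hne'; exact hne' rfl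
    have hveq : v (pi (-U) * f.coeff j) = 0 := by
      rcases (hgOmem j).eq_or_lt with h | h
      · exact h.symm
      · exfalso
        apply hne
        rw [hcj, hlimpos _ hne' h]
    refine ⟨j, hdeg, hfj, ?_⟩
    rw [hvmul _ _ (hpine _) hfj, hpiv] at hveq
    linarith
  · -- (b): zero set of fhat = lim of bounded roots
    have heval : ∀ y : K, fhat.eval y = c * (B.map (fun τ => y - lim τ)).prod := by
      intro y
      rw [h3fact, eval_mul, eval_C, eval_multiset_prod, Multiset.map_map]
      congr 1
      congr 1
      apply Multiset.map_congr rfl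
      intro τ _
      simp
    ext y
    simp only [Set.mem_setOf_eq, Set.mem_image, heval y, mul_eq_zero, or_iff_right hc0,
      Multiset.prod_eq_zero_iff]
    constructor
    · intro h0
      obtain ⟨τ, hτ, heq⟩ := Multiset.mem_map.mp h0
      exact ⟨τ, Multiset.mem_filter.mp hτ, (sub_eq_zero.mp heq).symm⟩
    · rintro ⟨τ, ⟨hτZ, hτv⟩, rfl⟩
      exact Multiset.mem_map.mpr ⟨τ, Multiset.mem_filter.mpr ⟨hτZ, hτv⟩, by rw [sub_self]⟩
  · -- (c): multiplicities
    intro y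
    rw [← Polynomial.count_roots, hroots, Multiset.count_map]
    congr 1
    exact Multiset.filter_congr (fun x _ => eq_comm)
end

section
/- Let f = ∏_{τ ∈ Σ}(T - τ) be a monic polynomial whose root multiset Σ lies in an algebraically closed valued field, with valuation (order) o(·), and let Υ ⊆ Σ be the sub-multiset of roots with negative order (unbounded roots). Then the coefficient of T^{d-|Υ|} in f has order exactly ∑_{τ∈Υ} o(τ), and every coefficient of f has order at least ∑_{τ∈Υ} o(τ). -/
open Polynomial

section Aux

variable {L Γ : Type*} [Field L] [LinearOrderedCommGroupWithZero Γ] (v : Valuation L Γ)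

/-- All coefficients of a product of `(X - τ)` with `v τ ≤ 1` have valuation `≤ 1`. -/
lemma aux_small (s : Multiset L) (hs : ∀ τ ∈ s, v τ ≤ 1) :
    ∀ j, v (((s.map (fun τ => X - C τ)).prod).coeff j) ≤ 1 := by
  induction s using Multiset.induction with
  | empty =>
    intro j
    simp only [Multiset.map_zero, Multiset.prod_zero, coeff_one]
    split <;> simp
  | cons a s ih =>
    have ha : v a ≤ 1 := hs a (Multiset.mem_cons_self a s)
    have ih' := ih (fun τ hτ => hs τ (Multiset.mem_cons_of_mem hτ))
    intro j
    rw [Multiset.map_cons, Multiset.prod_cons]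
    set q := ((s.map (fun τ => X - C τ)).prod) with hq
    have hexp : ∀ j, ((X - C a) * q).coeff j = q.coeff (j-1) - a * q.coeff j ∨
        ((X - C a) * q).coeff 0 = -a * q.coeff 0 ∧ j = 0 := by
      intro j
      cases j with
      | zero =>
        right
        constructor
        · rw [mul_coeff_zero]; ring_nf; simp [coeff_sub]; ring
        · rfl
      | succ n =>
        left
        rw [sub_mul, coeff_sub, coeff_X_mul]
        simp [mul_comm]
    rcases hexp j with h | ⟨h, hj0⟩
    · rw [h]
      refine le_trans (v.map_sub _ _) (max_le (ih' _) ?_)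
      rw [v.map_mul]
      calc v a * v (q.coeff j) ≤ 1 * 1 := mul_le_mul' ha (ih' j)
        _ = 1 := one_mul 1
    · rw [hj0, h, v.map_mul, v.map_neg]
      calc v a * v (q.coeff 0) ≤ 1 * 1 := mul_le_mul' ha (ih' 0)
        _ = 1 := one_mul 1

/-- For a product of `(X - τ)` with all `v τ > 1`: the constant coefficient has
valuation exactly `∏ v τ` and all higher coefficients have strictly smaller valuation. -/
lemma aux_big (s : Multiset L) (hs : ∀ τ ∈ s, 1 < v τ) :
    v (((s.map (fun τ => X - C τ)).prod).coeff 0) = (s.map (fun τ => v τ)).prod ∧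
    ∀ j, 1 ≤ j → v (((s.map (fun τ => X - C τ)).prod).coeff j)
      < (s.map (fun τ => v τ)).prod := by
  induction s using Multiset.induction with
  | empty =>
    constructor
    · simp
    · intro j hj
      simp only [Multiset.map_zero, Multiset.prod_zero, coeff_one]
      rw [if_neg (by omega)]
      simp
  | cons a s ih =>
    have ha : 1 < v a := hs a (Multiset.mem_cons_self a s)
    obtain ⟨ih0, ihj⟩ := ih (fun τ hτ => hs τ (Multiset.mem_cons_of_mem hτ))
    set q := ((s.map (fun τ => X - C τ)).prod) with hq
    set P := (s.map (fun τ => v τ)).prod with hP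
    have hP1 : 1 ≤ P := by
      refine Multiset.one_le_prod ?_
      intro g hg
      obtain ⟨τ, hτ, rfl⟩ := Multiset.mem_map.mp hg
      exact le_of_lt (hs τ (Multiset.mem_cons_of_mem hτ))
    have hP0 : (0 : Γ) < P := lt_of_lt_of_le zero_lt_one hP1
    have hqle : ∀ j, v (q.coeff j) ≤ P := by
      intro j
      cases j with
      | zero => exact le_of_eq ih0
      | succ n => exact le_of_lt (ihj (n+1) (by omega))
    have hcons : (((a ::ₘ s).map (fun τ => X - C τ)).prod) = (X - C a) * q := by
      rw [Multiset.map_cons, Multiset.prod_cons]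
    have hPc : ((a ::ₘ s).map (fun τ => v τ)).prod = v a * P := by
      rw [Multiset.map_cons, Multiset.prod_cons]
    rw [hcons, hPc]
    have hlt : P < v a * P := by
      nth_rewrite 1 [← mul_one P]
      rw [mul_comm (v a) P]
      exact mul_lt_mul_of_le_of_lt_of_nonneg_of_pos (le_refl P) ha zero_le' hP0
    constructor
    · rw [mul_coeff_zero]
      have : (X - C a).coeff 0 = -a := by simp
      rw [this, v.map_mul, v.map_neg, ih0]
    · intro j hj
      obtain ⟨n, rfl⟩ : ∃ n, j = n + 1 := ⟨j - 1, by omega⟩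
      have hexp : ((X - C a) * q).coeff (n+1) = q.coeff n - a * q.coeff (n+1) := by
        rw [sub_mul, coeff_sub, coeff_X_mul]
        simp [mul_comm]
      rw [hexp]
      refine lt_of_le_of_lt (v.map_sub _ _) (max_lt ?_ ?_)
      · calc v (q.coeff n) ≤ P := hqle n
          _ < v a * P := hlt
      · rw [v.map_mul]
        exact mul_lt_mul_of_le_of_lt_of_nonneg_of_pos (le_refl (v a))
          (ihj (n+1) (by omega)) zero_le' (lt_trans zero_lt_one ha)

end Aux

/-- For a monic polynomial `f = ∏_{τ∈Σ}(T-τ)` over an algebraically closed valued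
field, with `Υ ⊆ Σ` the sub-multiset of unbounded roots (valuation `> 1`, i.e.
negative order of vanishing), the coefficient of `T^(d-|Υ|)` has valuation exactly
`∏_{τ∈Υ} v(τ)` and every coefficient has valuation at most `∏_{τ∈Υ} v(τ)`. -/
theorem stmt11 {L Γ : Type*} [Field L] [IsAlgClosed L]
    [LinearOrderedCommGroupWithZero Γ]
    (v : Valuation L Γ) (Sig : Multiset L) (f : Polynomial L)
    (hf : f = (Sig.map (fun τ => X - C τ)).prod)
    (d : ℕ) (hd : d = Multiset.card Sig)
    (Ups : Multiset L) (hUps : Ups = Sig.filter (fun τ => 1 < v τ)) :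
    v (f.coeff (d - Multiset.card Ups)) = (Ups.map (fun τ => v τ)).prod ∧
    ∀ i : ℕ, v (f.coeff i) ≤ (Ups.map (fun τ => v τ)).prod := by
  -- complement multiset
  set Com := Sig.filter (fun τ => ¬ 1 < v τ) with hCom
  have hsplit : Ups + Com = Sig := by
    rw [hUps, hCom]; exact Multiset.filter_add_not _ _
  set g := ((Ups.map (fun τ => X - C τ)).prod) with hg
  set h := ((Com.map (fun τ => X - C τ)).prod) with hh
  have hfgh : f = g * h := by
    rw [hf, ← hsplit, Multiset.map_add, Multiset.prod_add]
  set P := (Ups.map (fun τ => v τ)).prod with hP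
  have hUmem : ∀ τ ∈ Ups, 1 < v τ := by
    intro τ hτ; rw [hUps] at hτ; exact (Multiset.mem_filter.mp hτ).2
  have hCmem : ∀ τ ∈ Com, v τ ≤ 1 := by
    intro τ hτ; rw [hCom] at hτ
    exact not_lt.mp (Multiset.mem_filter.mp hτ).2
  obtain ⟨hg0, hgj⟩ := aux_big v Ups hUmem
  have hgle : ∀ j, v (g.coeff j) ≤ P := by
    intro j
    cases j with
    | zero => exact le_of_eq hg0
    | succ n => exact le_of_lt (hgj (n+1) (by omega))
  have hhle := aux_small v Com hCmem
  have hP1 : 1 ≤ P := by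
    refine Multiset.one_le_prod ?_
    intro x hx
    obtain ⟨τ, hτ, rfl⟩ := Multiset.mem_map.mp hx
    exact le_of_lt (hUmem τ hτ)
  have hP0 : P ≠ 0 := ne_of_gt (lt_of_lt_of_le zero_lt_one hP1)
  -- the bound, for all i
  have hbound : ∀ i : ℕ, v (f.coeff i) ≤ P := by
    intro i
    rw [hfgh, coeff_mul]
    refine v.map_sum_le ?_
    intro p hp
    rw [v.map_mul]
    calc v (g.coeff p.1) * v (h.coeff p.2) ≤ P * 1 := mul_le_mul' (hgle p.1) (hhle p.2)
      _ = P := mul_one P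
  refine ⟨?_, hbound⟩
  -- the exact value at index m := d - card Ups
  have hcardC : Multiset.card Com = d - Multiset.card Ups := by
    have := congrArg Multiset.card hsplit
    rw [Multiset.card_add] at this
    omega
  set m := d - Multiset.card Ups with hm
  -- h is monic of degree m
  have hmonic : h.Monic := by
    rw [hh]
    exact monic_multiset_prod_of_monic _ _ (fun τ _ => monic_X_sub_C τ)
  have hdegh : h.natDegree = m := by
    rw [hh, natDegree_multiset_prod_of_monic _ (fun p hp => by
      obtain ⟨τ, hτ, rfl⟩ := Multiset.mem_map.mp hp; exact monic_X_sub_C τ)]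
    simp [Multiset.map_map, hcardC]
  have hhm : h.coeff m = 1 := by
    rw [← hdegh]; exact hmonic.coeff_natDegree
  rw [hfgh, coeff_mul]
  have hmem : ((0 : ℕ), m) ∈ Finset.HasAntidiagonal.antidiagonal m := by simp
  have h0 : v (g.coeff (0, m).1 * h.coeff (0, m).2) ≠ 0 := by
    rw [v.map_mul, hhm, map_one, mul_one, hg0]
    exact hP0
  rw [v.map_sum_eq_of_lt hmem ?hlt, v.map_mul, hhm, map_one, mul_one, hg0]
  case hlt =>
    intro p hp
    have hp' := (@Finset.mem_sdiff _ (fun a b => instDecidableEqProd a b) _ _ _).mp hp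
    have hp1 := Finset.HasAntidiagonal.mem_antidiagonal.mp hp'.1
    have hp2 : p ≠ ((0 : ℕ), m) := fun hpe => hp'.2 (Finset.mem_singleton.mpr hpe)
    have hfst : 1 ≤ p.1 := by
      by_contra hcon
      push_neg at hcon
      interval_cases h1 : p.1
      · exact hp2 (by rw [Prod.ext_iff]; exact ⟨h1, by omega⟩)
    rw [v.map_mul, v.map_mul, hhm, map_one, mul_one, hg0]
    calc v (g.coeff p.1) * v (h.coeff p.2) ≤ v (g.coeff p.1) * 1 :=
          mul_le_mul' (le_refl _) (hhle p.2)
      _ = v (g.coeff p.1) := mul_one _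
      _ < P := hgj p.1 hfst
end

section
/- Let K be a real closed field, p ∈ K[Y] with p ≥ 0 everywhere, Q: Kⁿ → K^k a polynomial map, and suppose x ∈ Kⁿ satisfies p(Q(x)) = 0 and p(Q(X)) is not identically zero. Let ε₁ ≫ ε₂ > 0 be infinitesimals over K. If every ball around x contains a point y with p(Q(y)) > 0, then there exists x̃ ∈ K⟨ε₁,ε₂⟩ⁿ with p(Q(x̃)) = ε₁ and lim_{ε₁,ε₂} x̃ = x. Consequently Z(p(Q(X)), Kⁿ) ⊆ lim_{ε} Z(p(Q(X)) - ε₁, K⟨ε₁,ε₂⟩ⁿ) whenever every zero of p∘Q is in the closure of {p∘Q > 0}. -/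
set_option maxHeartbeats 1000000
set_option synthInstance.maxHeartbeats 400000

open Polynomial Module


/-- A real closed ordered field: nonnegative elements are squares and every odd
degree polynomial has a root. -/
def IsRealClosedField (F : Type*) [Field F] [LinearOrder F] [IsStrictOrderedRing F] : Prop :=
  (∀ x : F, 0 ≤ x → ∃ y, y ^ 2 = x) ∧
    ∀ p : Polynomial F, Odd p.natDegree → ∃ x, p.eval x = 0

section RCF
variable {F : Type*} [Field F] [LinearOrder F] [IsStrictOrderedRing F]

lemma rcf_sqrt (hsq : ∀ x : F, 0 ≤ x → ∃ y, y ^ 2 = x) {x : F} (hx : 0 ≤ x) :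
    ∃ y : F, 0 ≤ y ∧ y ^ 2 = x := by
  obtain ⟨y, hy⟩ := hsq x hx
  exact ⟨|y|, abs_nonneg y, by rwa [sq_abs]⟩

lemma rcf_complex_sqrt (hsq : ∀ x : F, 0 ≤ x → ∃ y, y ^ 2 = x) (a b : F) :
    ∃ c d : F, c ^ 2 - d ^ 2 = a ∧ 2 * c * d = b := by
  obtain ⟨r, hr0, hr⟩ := rcf_sqrt hsq (show (0:F) ≤ a ^ 2 + b ^ 2 by positivity)
  have hra : |a| ≤ r := by nlinarith [sq_abs a, abs_nonneg a]
  have h1 : (0:F) ≤ (r + a) / 2 := by have := neg_abs_le a; linarith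
  have h2 : (0:F) ≤ (r - a) / 2 := by have := le_abs_self a; linarith
  obtain ⟨c, hc0, hc⟩ := rcf_sqrt hsq h1
  obtain ⟨d0, hd0, hd⟩ := rcf_sqrt hsq h2
  have hsq' : (2 * c * d0) ^ 2 = b ^ 2 := by nlinarith
  have habs : 2 * c * d0 = |b| := by
    have : (0:F) ≤ 2 * c * d0 := by positivity
    nlinarith [abs_nonneg b, sq_abs b]
  have key : c ^ 2 - d0 ^ 2 = a := by rw [hc, hd]; ring
  rcases le_or_gt 0 b with hb | hb
  · exact ⟨c, d0, key, by rw [habs, abs_of_nonneg hb]⟩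
  · refine ⟨c, -d0, by rw [neg_pow]; simpa using key, ?_⟩
    rw [mul_neg, habs, abs_of_neg hb]; ring

theorem rcf_irred_natDegree_le_two (hF : IsRealClosedField F)
    {q : F[X]} (hq : Irreducible q) : q.natDegree ≤ 2 := by
  classical
  obtain ⟨hsq, hodd⟩ := hF
  have hq0 : q ≠ 0 := hq.ne_zero
  have hx21 : (X ^ 2 + 1 : F[X]) ≠ 0 := by
    intro h
    have := congrArg (Polynomial.eval 0) h
    simp at this
  set P : F[X] := q * (X ^ 2 + 1) with hP
  have hP0 : P ≠ 0 := mul_ne_zero hq0 hx21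
  set L := P.SplittingField
  have hGal : IsGalois F L := ⟨⟩
  -- the imaginary unit
  have hsplits : Splits (P.map (algebraMap F L)) := SplittingField.splits P
  have h2s : Splits ((X ^ 2 + 1 : F[X]).map (algebraMap F L)) :=
    hsplits.of_dvd (Polynomial.map_ne_zero hP0) (Polynomial.map_dvd _ (dvd_mul_left _ _))
  have hdegx : (X ^ 2 + 1 : F[X]).degree = 2 := by
    compute_degree!
  obtain ⟨i, hi'⟩ := Splits.exists_eval_eq_zero h2s (by rw [degree_map, hdegx]; norm_num)
  have hi : i ^ 2 = -1 := by
    have : i ^ 2 + 1 = 0 := by simpa using hi'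
    linear_combination this
  -- minpoly of i
  have hmonic : (X ^ 2 + 1 : F[X]).Monic := by
    have := Polynomial.monic_X_pow_add_C (1 : F) (two_ne_zero)
    simpa using this
  have hndx : (X ^ 2 + 1 : F[X]).natDegree = 2 := by compute_degree!
  have hirr2 : Irreducible (X ^ 2 + 1 : F[X]) := by
    rw [hmonic.irreducible_iff_roots_eq_zero_of_degree_le_three (by omega) (by omega)]
    rw [Multiset.eq_zero_iff_forall_notMem]
    intro r hr
    rw [mem_roots hx21] at hr
    have : r ^ 2 + 1 = 0 := by simpa [IsRoot] using hr
    nlinarith [sq_nonneg r]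
  have hiI : IsIntegral F i := .of_finite F i
  have hmini : minpoly F i = X ^ 2 + 1 :=
    (minpoly.eq_of_irreducible_of_monic hirr2 (by simp [hi]) hmonic).symm
  set F' : IntermediateField F L := IntermediateField.adjoin F {i} with hF'
  have hdimF' : finrank F ↥F' = 2 := by
    rw [IntermediateField.adjoin.finrank hiI, hmini]; exact hndx
  -- every intermediate field of odd degree over F is trivial
  have hodd1 : ∀ M : IntermediateField F L, Odd (finrank F ↥M) → finrank F ↥M = 1 := by
    intro M hMo
    obtain ⟨α, hα⟩ := Field.exists_primitive_element F ↥M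
    have hαI : IsIntegral F α := .of_finite F α
    have hdeg : (minpoly F α).natDegree = finrank F ↥M := by
      rw [← IntermediateField.adjoin.finrank hαI, hα, IntermediateField.finrank_top']
    obtain ⟨r, hr⟩ := hodd (minpoly F α) (hdeg ▸ hMo)
    have hone := Polynomial.degree_eq_one_of_irreducible_of_root
      (minpoly.irreducible hαI) (p := minpoly F α) hr
    have : (minpoly F α).natDegree = 1 := natDegree_eq_of_degree_eq_some hone
    omega
  -- the Galois group is a 2-group
  have hcardG : ∃ v : ℕ, Fintype.card (L ≃ₐ[F] L) = 2 ^ v := by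
    have hc0 : Fintype.card (L ≃ₐ[F] L) ≠ 0 := Fintype.card_ne_zero
    haveI : Fact (Nat.Prime 2) := ⟨Nat.prime_two⟩
    set G := L ≃ₐ[F] L
    set c := Fintype.card G with hc
    obtain ⟨P₂⟩ : Nonempty (Sylow 2 G) := inferInstance
    have hcP : Nat.card ↥(P₂ : Subgroup G) = 2 ^ (Nat.card G).factorization 2 :=
      Sylow.card_eq_multiplicity P₂
    set M := IntermediateField.fixedField (P₂ : Subgroup G) with hM
    have hML : finrank ↥M L = Fintype.card ↥(P₂ : Subgroup G) :=
      (IntermediateField.finrank_fixedField_eq_card _).trans Nat.card_eq_fintype_card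
    have htower : finrank F ↥M * finrank ↥M L = finrank F L :=
      finrank_mul_finrank F ↥M L
    have hfr : finrank F L = c := (IsGalois.card_aut_eq_finrank F L).symm.trans Nat.card_eq_fintype_card
    have hNc : Nat.card G = c := Nat.card_eq_fintype_card
    rw [hML, hfr] at htower
    rw [hNc, Nat.card_eq_fintype_card] at hcP
    rw [hcP] at htower
    have hoddM : Odd (finrank F ↥M) := by
      have hdvd2 : ¬ 2 ∣ c / 2 ^ c.factorization 2 := Nat.not_dvd_ordCompl Nat.prime_two hc0
      have heq : finrank F ↥M = c / 2 ^ c.factorization 2 :=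
        (Nat.div_eq_of_eq_mul_left (pow_pos two_pos _) htower.symm).symm
      rw [heq, Nat.odd_iff]
      omega
    have h1 := hodd1 M hoddM
    rw [h1, one_mul] at htower
    exact ⟨_, htower.symm⟩
  obtain ⟨v, hv⟩ := hcardG
  -- degree of L over F'
  have htowF' : finrank F ↥F' * finrank ↥F' L = finrank F L :=
    finrank_mul_finrank F ↥F' L
  have hfrL : finrank F L = 2 ^ v := by rw [← hv, ← Nat.card_eq_fintype_card, IsGalois.card_aut_eq_finrank F L]
  have hdvd : finrank ↥F' L ∣ 2 ^ v := ⟨finrank F ↥F', by rw [← hfrL, ← htowF']; ring⟩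
  obtain ⟨j, hjle, hj⟩ := (Nat.dvd_prime_pow Nat.prime_two).1 hdvd
  -- sqrt in F'
  have hsqF' : ∀ z : ↥F', ∃ w : ↥F', w ^ 2 = z := by
    intro z
    set pb := IntermediateField.adjoin.powerBasis hiI with hpb
    have hdim : pb.dim = 2 := by
      rw [hpb, IntermediateField.adjoin.powerBasis_dim, hmini]; exact hndx
    obtain ⟨f, hfdeg, hzf⟩ := pb.exists_eq_aeval z
    have hf1 : f.natDegree ≤ 1 := by omega
    have hfeq := eq_X_add_C_of_natDegree_le_one hf1
    set a := f.coeff 0 with ha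
    set b := f.coeff 1 with hbb
    have hgenL : (pb.gen : L) = i := by
      rw [hpb, IntermediateField.adjoin.powerBasis_gen]
      exact IntermediateField.AdjoinSimple.coe_gen F i
    have hgen : pb.gen ^ 2 = -1 := by
      apply Subtype.ext
      push_cast
      rw [hgenL, hi]
    obtain ⟨c, d, h1, h2⟩ := rcf_complex_sqrt hsq a b
    set A := algebraMap F ↥F' with hA
    have hz : z = A a + A b * pb.gen := by
      rw [hzf, hfeq]
      simp only [map_add, map_mul, aeval_X, aeval_C, hA]
      ring
    refine ⟨A c + A d * pb.gen, ?_⟩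
    rw [hz, ← h1, ← h2]
    have e1 : A (c ^ 2 - d ^ 2) = A c ^ 2 - A d ^ 2 := by
      rw [map_sub, map_pow, map_pow]
    have e2 : A (2 * c * d) = 2 * A c * A d := by
      rw [map_mul, map_mul, map_ofNat]
    rw [e1, e2]
    linear_combination (A d) ^ 2 * hgen
  by_cases hj0 : j = 0
  · -- L = F', so finrank F L = 2 and q has degree dividing 2
    subst hj0
    rw [pow_zero] at hj
    rw [hj, mul_one, hdimF'] at htowF'
    have hqs : Splits (q.map (algebraMap F L)) :=
      hsplits.of_dvd (Polynomial.map_ne_zero hP0) (Polynomial.map_dvd _ (dvd_mul_right _ _))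
    have hqd : q.degree ≠ 0 := by
      intro h
      exact hq.not_isUnit (isUnit_iff_degree_eq_zero.2 h)
    obtain ⟨α, hα⟩ := Splits.exists_eval_eq_zero hqs (by rwa [degree_map])
    have hαI : IsIntegral F α := .of_finite F α
    have hmq : minpoly F α = q * C q.leadingCoeff⁻¹ := (minpoly.eq_of_irreducible hq (by rwa [eval_map_algebraMap] at hα)).symm
    have hnd : (minpoly F α).natDegree = q.natDegree := by
      rw [hmq, natDegree_mul_C (inv_ne_zero (leadingCoeff_ne_zero.2 hq0))]
    have hfin : finrank F ↥(IntermediateField.adjoin F {α}) = q.natDegree := by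
      rw [IntermediateField.adjoin.finrank hαI, hnd]
    have hdv : q.natDegree ∣ finrank F L := by
      rw [← hfin]
      exact Dvd.intro _ (finrank_mul_finrank F ↥(IntermediateField.adjoin F {α}) L)
    rw [← htowF'] at hdv
    exact Nat.le_of_dvd (by norm_num) hdv
  · -- contradiction: quadratic extension of F'
    exfalso
    haveI : Fact (Nat.Prime 2) := ⟨Nat.prime_two⟩
    have hcard' : Nat.card (L ≃ₐ[↥F'] L) = 2 ^ j := by
      rw [IsGalois.card_aut_eq_finrank ↥F' L, hj]
    have hdvd' : (2:ℕ) ^ (j - 1) ∣ Nat.card (L ≃ₐ[↥F'] L) := by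
      rw [hcard']
      exact pow_dvd_pow 2 (by omega)
    obtain ⟨S, hS⟩ := Sylow.exists_subgroup_card_pow_prime 2 hdvd'
    set N := IntermediateField.fixedField S with hN
    have hNL : finrank ↥N L = 2 ^ (j - 1) := by
      rw [IntermediateField.finrank_fixedField_eq_card, hS]
    have htowN : finrank ↥F' ↥N * finrank ↥N L = finrank ↥F' L :=
      finrank_mul_finrank ↥F' ↥N L
    have hNF' : finrank ↥F' ↥N = 2 := by
      rw [hNL, hj] at htowN
      have h2j : (2:ℕ) ^ j = 2 * 2 ^ (j - 1) := by
        rw [← pow_succ']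
        congr 1
        omega
      rw [h2j] at htowN
      exact Nat.eq_of_mul_eq_mul_right (by positivity) htowN
    -- get an element α of N not in F'
    have hbotN : ¬ (⊥ : Subalgebra ↥F' ↥N) = ⊤ := by
      intro h
      have := Subalgebra.bot_eq_top_iff_finrank_eq_one.1 h
      omega
    obtain ⟨α, hαnot⟩ : ∃ α : ↥N, α ∉ (algebraMap ↥F' ↥N).range := by
      by_contra h
      push_neg at h
      apply hbotN
      rw [eq_top_iff]
      intro z _
      rw [Algebra.mem_bot]
      exact h z
    have hαI : IsIntegral ↥F' α := .of_finite _ α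
    set mp := minpoly ↥F' α with hmp
    have hd2 : mp.natDegree = 2 := by
      have hdv : mp.natDegree ∣ 2 := by
        rw [← hNF', ← IntermediateField.adjoin.finrank hαI]
        exact Dvd.intro _ (finrank_mul_finrank ↥F' ↥(IntermediateField.adjoin ↥F' {α}) ↥N)
      have hne1 : mp.natDegree ≠ 1 := fun h => hαnot (minpoly.natDegree_eq_one_iff.1 h)
      have hpos : 0 < mp.natDegree := minpoly.natDegree_pos hαI
      rcases (Nat.prime_two).eq_one_or_self_of_dvd _ hdv with h | h <;> omega
    -- mp = X^2 + bX + c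
    set b := mp.coeff 1 with hb
    set cc := mp.coeff 0 with hcc
    have hmonic' : mp.Monic := minpoly.monic hαI
    have hsplit : mp = X ^ 2 + (C b * X + C cc) := by
      have hsub : (mp - X ^ 2).natDegree ≤ 1 := by
        rw [natDegree_le_iff_coeff_eq_zero]
        intro m hm
        rw [coeff_sub, coeff_X_pow]
        rcases eq_or_lt_of_le (show 2 ≤ m by omega) with h | h
        · rw [← h, if_pos rfl]
          have : mp.coeff 2 = 1 := by
            have := hmonic'.coeff_natDegree
            rwa [hd2] at this
          rw [this]
          ring
        · rw [if_neg (by omega), coeff_eq_zero_of_natDegree_lt (by omega)]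
          ring
      have := eq_X_add_C_of_natDegree_le_one hsub
      have hc1 : (mp - X ^ 2).coeff 1 = b := by simp [hb]
      have hc0 : (mp - X ^ 2).coeff 0 = cc := by simp [hcc]
      rw [hc1, hc0] at this
      linear_combination this
    have heval : α ^ 2 + algebraMap ↥F' ↥N b * α + algebraMap ↥F' ↥N cc = 0 := by
      have := minpoly.aeval ↥F' α
      rw [← hmp, hsplit] at this
      simpa [Algebra.smul_def, ← add_assoc] using this
    -- β = α + b/2 has β² ∈ F'
    set A := algebraMap ↥F' ↥N with hA
    set β := α + A (b / 2) with hβ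
    have hβnot : β ∉ A.range := by
      intro ⟨u, hu⟩
      apply hαnot
      exact ⟨u - b / 2, by rw [map_sub, hu, hβ]; ring⟩
    have hβsq : β ^ 2 = A (b ^ 2 / 4 - cc) := by
      have e1 : A (b ^ 2 / 4 - cc) = (A b) ^ 2 / 4 - A cc := by
        rw [map_sub, map_div₀, map_pow, map_ofNat]
      have e2 : A (b / 2) = A b / 2 := by
        rw [map_div₀, map_ofNat]
      rw [e1, hβ, e2]
      linear_combination heval
    obtain ⟨w, hw⟩ := hsqF' (b ^ 2 / 4 - cc)
    have hfactor : (A w - β) * (A w + β) = 0 := by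
      have : (A w) ^ 2 = β ^ 2 := by rw [← map_pow, hw, hβsq]
      linear_combination this
    rcases mul_eq_zero.1 hfactor with h | h
    · exact hβnot ⟨w, by linear_combination h⟩
    · exact hβnot ⟨-w, by rw [map_neg]; linear_combination -h⟩

theorem rcf_sign_root (hF : IsRealClosedField F) :
    ∀ (d : ℕ) (g : F[X]), g.natDegree ≤ d → ∀ a b : F, a < b →
      g.eval a * g.eval b < 0 → ∃ t, a < t ∧ t < b ∧ g.eval t = 0 := by
  intro d
  induction d with
  | zero =>
    intro g hg a b _ hsign
    rw [Nat.le_zero] at hg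
    have : g = C (g.coeff 0) := eq_C_of_natDegree_eq_zero hg
    rw [this] at hsign
    simp only [eval_C] at hsign
    nlinarith
  | succ d ih =>
    intro g hg a b hab hsign
    have hg0 : g ≠ 0 := by
      intro h
      rw [h] at hsign
      simp at hsign
    by_cases hgd : g.natDegree = 0
    · have : g = C (g.coeff 0) := eq_C_of_natDegree_eq_zero hgd
      rw [this] at hsign
      simp only [eval_C] at hsign
      nlinarith
    have hgu : ¬IsUnit g := by
      intro h
      rw [Polynomial.isUnit_iff_degree_eq_zero] at h
      exact hgd (natDegree_eq_of_degree_eq_some h)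
    obtain ⟨q, hqirr, hqdvd⟩ := WfDvdMonoid.exists_irreducible_factor hgu hg0
    obtain ⟨h, rfl⟩ := hqdvd
    have hq0 : q ≠ 0 := hqirr.ne_zero
    have hh0 : h ≠ 0 := fun hh => hg0 (by rw [hh, mul_zero])
    have hqd1 : 1 ≤ q.natDegree := by
      rcases Nat.eq_zero_or_pos q.natDegree with h0 | h0
      · exfalso
        exact hqirr.not_isUnit (Polynomial.isUnit_iff_degree_eq_zero.2
          (degree_eq_natDegree hq0 ▸ by rw [h0]; rfl))
      · exact h0
    have hqd2 : q.natDegree ≤ 2 := rcf_irred_natDegree_le_two hF hqirr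
    have hnd : q.natDegree + h.natDegree = (q * h).natDegree := (natDegree_mul hq0 hh0).symm
    rw [eval_mul, eval_mul] at hsign
    rcases lt_trichotomy (q.eval a * q.eval b) 0 with hqs | hqs | hqs
    · -- the irreducible factor changes sign; it has degree 1 or 2
      have hroot : ∃ t, a < t ∧ t < b ∧ q.eval t = 0 := by
        rcases eq_or_lt_of_le hqd2 with h2 | h2
        · -- degree 2 : impossible, q has constant sign
          exfalso
          have hq2 : q.natDegree = 2 := h2
          set c2 := q.coeff 2 with hc2
          set c1 := q.coeff 1 with hc1
          set c0 := q.coeff 0 with hc0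
          have hc2ne : c2 ≠ 0 := by
            rw [hc2, ← hq2]
            exact fun hh => hg0 (by simp [leadingCoeff_eq_zero.1 hh])
          have heval : ∀ t : F, q.eval t = c0 + c1 * t + c2 * t ^ 2 := by
            intro t
            rw [eval_eq_sum_range, hq2]
            simp [Finset.sum_range_succ]
            try ring
          have hnoroot : ∀ t : F, q.eval t ≠ 0 := by
            intro t ht
            have := Polynomial.degree_eq_one_of_irreducible_of_root hqirr ht
            have h1 : q.natDegree = 1 := natDegree_eq_of_degree_eq_some this
            rw [hq2] at h1
            exact absurd h1 (by norm_num)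
          have hD : c1 ^ 2 - 4 * c2 * c0 < 0 := by
            by_contra hD
            push_neg at hD
            obtain ⟨s, hs0, hs⟩ := rcf_sqrt hF.1 (by linarith : (0:F) ≤ c1 ^ 2 - 4 * c2 * c0)
            apply hnoroot ((-c1 + s) / (2 * c2))
            rw [heval]
            field_simp
            ring_nf
            nlinarith [hs]
          have hpos : ∀ t : F, 0 < c2 * q.eval t := by
            intro t
            rw [heval]
            nlinarith [sq_nonneg (c2 * t + c1 / 2), sq_nonneg c2]
          nlinarith [mul_pos (hpos a) (hpos b), hqs, sq_nonneg c2]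
        · -- degree 1
          have hq1 : q.natDegree = 1 := by omega
          set c1 := q.coeff 1 with hc1
          set c0 := q.coeff 0 with hc0
          have hc1ne : c1 ≠ 0 := by
            rw [hc1, ← hq1]
            exact fun hh => hq0 (leadingCoeff_eq_zero.1 hh)
          have heval : ∀ t : F, q.eval t = c1 * t + c0 := by
            intro t
            conv_lhs => rw [eq_X_add_C_of_natDegree_le_one (le_of_eq hq1)]
            simp
            rfl
          refine ⟨-c0 / c1, ?_, ?_, ?_⟩
          · have hprod : (c1 * a + c0) * (c1 * b + c0) < 0 := by
              rw [← heval, ← heval]; exact hqs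
            have h1 : (a - (-c0 / c1)) * (b - (-c0 / c1)) < 0 := by
              have : c1 ^ 2 * ((a - (-c0 / c1)) * (b - (-c0 / c1)))
                  = (c1 * a + c0) * (c1 * b + c0) := by
                field_simp
                ring
              nlinarith [sq_nonneg c1, pow_pos (lt_of_le_of_ne (sq_nonneg c1)
                (fun hh => hc1ne (by nlinarith [hh.symm]))) 1]
            nlinarith
          · have hprod : (c1 * a + c0) * (c1 * b + c0) < 0 := by
              rw [← heval, ← heval]; exact hqs
            have h1 : (a - (-c0 / c1)) * (b - (-c0 / c1)) < 0 := by
              have : c1 ^ 2 * ((a - (-c0 / c1)) * (b - (-c0 / c1)))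
                  = (c1 * a + c0) * (c1 * b + c0) := by
                field_simp
                ring
              nlinarith [sq_nonneg c1, pow_pos (lt_of_le_of_ne (sq_nonneg c1)
                (fun hh => hc1ne (by nlinarith [hh.symm]))) 1]
            nlinarith
          · rw [heval]
            field_simp
            ring
      obtain ⟨t, ht1, ht2, ht3⟩ := hroot
      exact ⟨t, ht1, ht2, by rw [eval_mul, ht3, zero_mul]⟩
    · -- a factor vanishes at an endpoint: impossible
      exfalso
      rcases mul_eq_zero.1 hqs with h0 | h0 <;> rw [h0] at hsign <;> nlinarith
    · -- the cofactor changes sign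
      have hhs : h.eval a * h.eval b < 0 := by nlinarith
      obtain ⟨t, ht1, ht2, ht3⟩ := ih h (by omega) a b hab hhs
      exact ⟨t, ht1, ht2, by rw [eval_mul, ht3, mul_zero]⟩

theorem rcf_ivt (hF : IsRealClosedField F) (g : F[X]) {a b : F} (hab : a < b)
    (ha : g.eval a < 0) (hb : 0 < g.eval b) : ∃ t, a < t ∧ t < b ∧ g.eval t = 0 :=
  rcf_sign_root hF g.natDegree g le_rfl a b hab (mul_neg_of_neg_of_pos ha hb)

end RCF

/-- Final lemma of Section 5: let `K` be real closed, `p ≥ 0` everywhere,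
`Q : Kⁿ → K^k` polynomial, `p(Q(X))` not identically zero, and `x` a zero of
`p∘Q` such that every ball around `x` contains a point `y` with `p(Q(y)) > 0`.
With `ε₁ ≫ ε₂ > 0` infinitesimals over `K` (in a real closed extension `K'`
with order embedding `ι` and standard part `st`), there exists
`x̃ ∈ K⟨ε₁,ε₂⟩ⁿ` with `p(Q(x̃)) = ε₁`, each coordinate bounded over `K`, and
`lim_ε x̃ = x`. -/
theorem stmt16 {K K' : Type*} [Field K] [LinearOrder K] [IsStrictOrderedRing K]
    [Field K'] [LinearOrder K'] [IsStrictOrderedRing K']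
    (hK : IsRealClosedField K) (hK' : IsRealClosedField K')
    (ι : K →+* K') (hι : StrictMono ι)
    (ε₁ ε₂ : K') (hε₂ : 0 < ε₂) (hε₂₁ : ∀ m : ℕ, 0 < m → ε₂ < ε₁ ^ m)
    (hε₁inf : 0 < ε₁ ∧ ∀ a : K, 0 < a → ε₁ < ι a)
    (st : K' → K) (hst1 : ∀ a : K, st (ι a) = a)
    (hst2 : ∀ z : K', (∃ b : K, |z| ≤ ι b) → ∀ δ : K, 0 < δ → |z - ι (st z)| < ι δ)
    {n k : ℕ}
    (p : MvPolynomial (Fin k) K) (Q : Fin k → MvPolynomial (Fin n) K)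
    (hp : ∀ y : Fin k → K, 0 ≤ MvPolynomial.eval y p)
    (pq : MvPolynomial (Fin n) K) (hpq : pq = MvPolynomial.bind₁ Q p)
    (hne : pq ≠ 0)
    (x : Fin n → K) (hx : MvPolynomial.eval x pq = 0)
    (happrox : ∀ δ : K, 0 < δ →
      ∃ y : Fin n → K, (∀ i, |y i - x i| < δ) ∧ 0 < MvPolynomial.eval y pq) :
    ∃ xt : Fin n → K',
      MvPolynomial.eval xt (MvPolynomial.map ι pq) = ε₁ ∧
      ∀ i, (∃ b : K, |xt i| ≤ ι b) ∧ st (xt i) = x i := by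
  classical
  -- basic order facts about ι
  have hι0 : ∀ {a : K}, 0 < a → 0 < ι a := fun {a} ha => by
    have := hι ha; rwa [map_zero] at this
  have hιle : ∀ {a b : K}, a ≤ b → ι a ≤ ι b := fun {a b} h => hι.monotone h
  have hιabs : ∀ a : K, |ι a| = ι |a| := by
    intro a
    rcases le_or_gt 0 a with h | h
    · rw [abs_of_nonneg h, abs_of_nonneg]
      rw [← map_zero ι]; exact hιle h
    · rw [abs_of_neg h, abs_of_neg, map_neg]
      rw [← map_zero ι]; exact hι h
  -- the polynomial pq is nonnegative everywhere
  have hpqnn : ∀ y : Fin n → K, 0 ≤ MvPolynomial.eval y pq := by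
    intro y
    rw [hpq]
    rw [show MvPolynomial.eval y (MvPolynomial.bind₁ Q p)
        = MvPolynomial.eval (fun j => MvPolynomial.eval y (Q j)) p from
        MvPolynomial.eval₂Hom_bind₁ (RingHom.id K) y Q p]
    exact hp _
  -- a point where pq is nonzero
  obtain ⟨z, hz⟩ : ∃ z : Fin n → K, MvPolynomial.eval z pq ≠ 0 := by
    by_contra h
    push_neg at h
    exact hne (MvPolynomial.funext fun y => by simp [h y])
  set v : Fin n → K := fun i => z i - x i with hv
  -- the univariate restriction of pq to the segment from x towards z
  set φ : Polynomial K := MvPolynomial.eval₂ (Polynomial.C : K →+* Polynomial K)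
    (fun i => Polynomial.C (x i) + Polynomial.C (v i) * Polynomial.X) pq with hφ
  have hφeval : ∀ t : K, φ.eval t = MvPolynomial.eval (fun i => x i + v i * t) pq := by
    intro t
    rw [hφ]
    rw [show φ.eval t = (Polynomial.evalRingHom t) φ from rfl]
    rw [hφ, MvPolynomial.eval₂_comp_left (Polynomial.evalRingHom t)]
    have h1 : (Polynomial.evalRingHom t).comp (Polynomial.C : K →+* Polynomial K)
        = RingHom.id K := by ext r; simp
    have h2 : ((Polynomial.evalRingHom t) ∘ fun i =>
        Polynomial.C (x i) + Polynomial.C (v i) * Polynomial.X) = fun i => x i + v i * t := by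
      funext i; simp
    rw [h1, h2]
    rfl
  have hφK' : ∀ τ : K', (φ.map ι).eval τ
      = MvPolynomial.eval (fun i => ι (x i) + ι (v i) * τ) (MvPolynomial.map ι pq) := by
    intro τ
    rw [MvPolynomial.eval_map, Polynomial.eval_map, hφ]
    rw [show Polynomial.eval₂ ι τ (MvPolynomial.eval₂ Polynomial.C
        (fun i => Polynomial.C (x i) + Polynomial.C (v i) * Polynomial.X) pq)
        = (Polynomial.eval₂RingHom ι τ) (MvPolynomial.eval₂ Polynomial.C
        (fun i => Polynomial.C (x i) + Polynomial.C (v i) * Polynomial.X) pq) from rfl]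
    rw [MvPolynomial.eval₂_comp_left (Polynomial.eval₂RingHom ι τ)]
    have h1 : (Polynomial.eval₂RingHom ι τ).comp (Polynomial.C : K →+* Polynomial K) = ι := by
      ext r
      simp
    rw [h1]
    congr 1
    funext i
    simp
  have hφ0 : φ.eval 0 = 0 := by rw [hφeval]; simpa using hx
  have hφ1 : φ.eval 1 ≠ 0 := by
    rw [hφeval]
    simpa [hv] using hz
  have hφne : φ ≠ 0 := fun h => hφ1 (by rw [h]; simp)
  have hφnn : ∀ t : K, 0 ≤ φ.eval t := fun t => by rw [hφeval]; exact hpqnn _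
  -- a small positive u with φ > 0 on (0, u]
  obtain ⟨u, hu0, hupos⟩ : ∃ u : K, 0 < u ∧ ∀ s : K, 0 < s → s ≤ u → 0 < φ.eval s := by
    set R := φ.roots.toFinset.filter (fun r => 0 < r) with hR
    have key : ∀ w : K, 0 < w → (∀ r ∈ R, w < r) → ∀ s : K, 0 < s → s ≤ w → 0 < φ.eval s := by
      intro w hw hwR s hs hsw
      rcases lt_or_eq_of_le (hφnn s) with h | h
      · exact h
      · exfalso
        have hmem : s ∈ R := by
          rw [hR, Finset.mem_filter, Multiset.mem_toFinset, Polynomial.mem_roots hφne]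
          exact ⟨h.symm, hs⟩
        exact absurd (lt_of_le_of_lt hsw (hwR s hmem)) (lt_irrefl s) 
    by_cases hRe : R.Nonempty
    · refine ⟨R.min' hRe / 2, ?_, key _ ?_ ?_⟩
      · have : 0 < R.min' hRe := (Finset.mem_filter.1 (R.min'_mem hRe)).2
        linarith
      · have : 0 < R.min' hRe := (Finset.mem_filter.1 (R.min'_mem hRe)).2
        linarith
      · intro r hr
        have h1 := R.min'_le r hr
        have : 0 < R.min' hRe := (Finset.mem_filter.1 (R.min'_mem hRe)).2
        linarith
    · refine ⟨1, one_pos, key 1 one_pos ?_⟩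
      intro r hr
      exact absurd ⟨r, hr⟩ hRe
  -- pass to K' and find roots of (map ι φ) - ε₁ below every standard positive element
  set g : Polynomial K' := φ.map ι - Polynomial.C ε₁ with hg
  have hgne : g ≠ 0 := by
    intro h
    have h0 : g.eval 0 = 0 := by rw [h]; simp
    rw [hg] at h0
    simp only [Polynomial.eval_sub, Polynomial.eval_C] at h0
    have : (φ.map ι).eval 0 = ι (φ.coeff 0) := by
      rw [Polynomial.eval_map, Polynomial.eval₂_at_zero]
    rw [this, Polynomial.coeff_zero_eq_eval_zero, hφ0, map_zero] at h0
    have := hε₁inf.1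
    linarith
  have hgroot : ∀ s : K, 0 < s → s ≤ u → ∃ τ : K', 0 < τ ∧ τ < ι s ∧ g.eval τ = 0 := by
    intro s hs hsu
    have ha : g.eval 0 < 0 := by
      rw [hg]
      simp only [Polynomial.eval_sub, Polynomial.eval_C]
      have : (φ.map ι).eval 0 = ι (φ.coeff 0) := by
        rw [Polynomial.eval_map, Polynomial.eval₂_at_zero]
      rw [this, Polynomial.coeff_zero_eq_eval_zero, hφ0, map_zero]
      have := hε₁inf.1
      linarith
    have hb : 0 < g.eval (ι s) := by
      rw [hg]
      simp only [Polynomial.eval_sub, Polynomial.eval_C]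
      have : (φ.map ι).eval (ι s) = ι (φ.eval s) := by
        rw [Polynomial.eval_map, Polynomial.eval₂_at_apply]
      rw [this]
      have := hε₁inf.2 (φ.eval s) (hupos s hs hsu)
      linarith
    exact rcf_ivt hK' g (hι0 hs) ha hb
  set T := g.roots.toFinset.filter (fun r => 0 < r) with hT
  have hTne : T.Nonempty := by
    obtain ⟨τ, hτ0, hτu, hτroot⟩ := hgroot u hu0 le_rfl
    exact ⟨τ, by
      rw [hT, Finset.mem_filter, Multiset.mem_toFinset, Polynomial.mem_roots hgne]
      exact ⟨hτroot, hτ0⟩⟩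
  set τ := T.min' hTne with hτ
  have hτpos : 0 < τ := (Finset.mem_filter.1 (T.min'_mem hTne)).2
  have hτroot : g.eval τ = 0 := by
    have := (Finset.mem_filter.1 (T.min'_mem hTne)).1
    rw [Multiset.mem_toFinset, Polynomial.mem_roots hgne] at this
    exact this
  have hτsmall : ∀ δ : K, 0 < δ → τ < ι δ := by
    intro δ hδ
    have hmin : 0 < min δ u := lt_min hδ hu0
    obtain ⟨ρ, hρ0, hρlt, hρroot⟩ := hgroot (min δ u) hmin (min_le_right _ _)
    have hρT : ρ ∈ T := by
      rw [hT, Finset.mem_filter, Multiset.mem_toFinset, Polynomial.mem_roots hgne]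
      exact ⟨hρroot, hρ0⟩
    calc τ ≤ ρ := T.min'_le ρ hρT
    _ < ι (min δ u) := hρlt
    _ ≤ ι δ := hιle (min_le_left _ _)
  have hτ1 : τ ≤ ι 1 := le_of_lt (hτsmall 1 one_pos)
  have hφτ : (φ.map ι).eval τ = ε₁ := by
    have : g.eval τ = (φ.map ι).eval τ - ε₁ := by rw [hg]; simp
    rw [this] at hτroot
    linarith
  -- the witness
  refine ⟨fun i => ι (x i) + ι (v i) * τ, ?_, ?_⟩
  · rw [← hφK', hφτ]
  · intro i
    constructor
    · refine ⟨|x i| + |v i|, ?_⟩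
      calc |ι (x i) + ι (v i) * τ| ≤ |ι (x i)| + |ι (v i) * τ| := abs_add_le _ _
      _ = |ι (x i)| + |ι (v i)| * τ := by rw [abs_mul, abs_of_pos hτpos]
      _ ≤ ι |x i| + ι |v i| * ι 1 := by
          refine add_le_add (le_of_eq (hιabs _)) ?_
          rw [hιabs]
          exact mul_le_mul le_rfl hτ1 (le_of_lt hτpos) (by rw [← map_zero ι]; exact hιle (abs_nonneg _))
      _ = ι (|x i| + |v i|) := by rw [← map_mul, ← map_add, mul_one]
    · -- standard part is x i
      set w : K' := ι (x i) + ι (v i) * τ with hw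
      have hclose : ∀ δ : K, 0 < δ → |w - ι (x i)| < ι δ := by
        intro δ hδ
        have : w - ι (x i) = ι (v i) * τ := by rw [hw]; ring
        rw [this, abs_mul, abs_of_pos hτpos, hιabs]
        by_cases hvi : v i = 0
        · rw [hvi]
          simp only [abs_zero, map_zero, zero_mul]
          exact hι0 hδ
        · have habs : 0 < |v i| := abs_pos.2 hvi
          calc ι |v i| * τ < ι |v i| * ι (δ / |v i|) :=
            mul_lt_mul_of_pos_left (hτsmall _ (div_pos hδ habs)) (hι0 habs)
          _ = ι (|v i| * (δ / |v i|)) := by rw [map_mul]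
          _ = ι δ := by rw [mul_div_cancel₀ _ (ne_of_gt habs)]
      have hbdd : ∃ b : K, |w| ≤ ι b := by
        refine ⟨|x i| + |v i|, ?_⟩
        calc |w| ≤ |ι (x i)| + |ι (v i) * τ| := abs_add_le _ _
        _ = |ι (x i)| + |ι (v i)| * τ := by rw [abs_mul, abs_of_pos hτpos]
        _ ≤ ι |x i| + ι |v i| * ι 1 := by
            refine add_le_add (le_of_eq (hιabs _)) ?_
            rw [hιabs]
            exact mul_le_mul le_rfl hτ1 (le_of_lt hτpos) (by rw [← map_zero ι]; exact hιle (abs_nonneg _))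
        _ = ι (|x i| + |v i|) := by rw [← map_mul, ← map_add, mul_one]
      by_contra hne'
      have hd : 0 < |st w - x i| := abs_pos.2 (sub_ne_zero.2 hne')
      have hδ := hd
      set δ := |st w - x i| / 2 with hδdef
      have hδ0 : 0 < δ := by positivity
      have h1 := hst2 w hbdd δ hδ0
      have h2 := hclose δ hδ0
      have h3 : |ι (st w) - ι (x i)| < ι δ + ι δ := by
        calc |ι (st w) - ι (x i)| ≤ |ι (st w) - w| + |w - ι (x i)| := by
              have := abs_sub_le (ι (st w)) w (ι (x i))
              exact this
        _ < ι δ + ι δ := by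
              rw [abs_sub_comm]
              exact add_lt_add h1 h2
      rw [← map_add, ← map_sub, hιabs] at h3
      have h4 : |st w - x i| < δ + δ := by
        have := hι.lt_iff_lt.1 h3
        linarith [this]
      rw [hδdef] at h4
      linarith [h4]
end

section
/- Let A be a finite-dimensional commutative algebra over an algebraically closed field of characteristic zero, presented as K[X₁,…,X_q]/(I) for a zero-dimensional ideal I with zero set Z̄ (points x with multiplicities μ(x)). Then for any f ∈ A and j ≥ 0, the trace of the multiplication-by-f^j operator on A equals ∑_{x ∈ Z̄} μ(x) f(x)^j. -/
set_option synthInstance.maxHeartbeats 1000000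
set_option maxHeartbeats 8000000

/-- The evaluation homomorphism `K[X₁,…,X_q]/I → K` at a common zero `x` of `I`. -/
noncomputable def evalQuot {K : Type*} [Field K] {q : ℕ}
    (I : Ideal (MvPolynomial (Fin q) K)) (x : Fin q → K)
    (hx : x ∈ {x : Fin q → K | ∀ p ∈ I, MvPolynomial.eval x p = 0}) :
    (MvPolynomial (Fin q) K ⧸ I) →+* K :=
  Ideal.Quotient.lift I (MvPolynomial.eval x) hx

/-- The multiplicity of a common zero `x` of a zero-dimensional ideal `I`: the
`K`-dimension of the local component, i.e. of the localization of `K[X]/I`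
at the maximal ideal corresponding to `x`. -/
noncomputable def localMultiplicity {K : Type*} [Field K] {q : ℕ}
    (I : Ideal (MvPolynomial (Fin q) K)) (x : Fin q → K)
    (hx : x ∈ {x : Fin q → K | ∀ p ∈ I, MvPolynomial.eval x p = 0}) : ℕ :=
  letI prime : (RingHom.ker (evalQuot I x hx)).IsPrime :=
    RingHom.ker_isPrime (evalQuot I x hx)
  letI : Algebra K (Localization.AtPrime (RingHom.ker (evalQuot I x hx))) :=
    ((algebraMap (MvPolynomial (Fin q) K ⧸ I)
        (Localization.AtPrime (RingHom.ker (evalQuot I x hx)))).comp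
      (algebraMap K (MvPolynomial (Fin q) K ⧸ I))).toAlgebra
  Module.finrank K (Localization.AtPrime (RingHom.ker (evalQuot I x hx)))


section Aux
variable {K : Type*} [Field K] {q : ℕ} (I : Ideal (MvPolynomial (Fin q) K))

local notation "A" => MvPolynomial (Fin q) K ⧸ I

lemma evalQuot_mk (x : Fin q → K) (hx : x ∈ {x : Fin q → K | ∀ p ∈ I, MvPolynomial.eval x p = 0})
    (p : MvPolynomial (Fin q) K) :
    evalQuot I x hx (Ideal.Quotient.mk I p) = MvPolynomial.eval x p := rfl

lemma evalQuot_algebraMap (x : Fin q → K) (hx : x ∈ {x | ∀ p ∈ I, MvPolynomial.eval x p = 0})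
    (c : K) : evalQuot I x hx (algebraMap K A c) = c := by
  have : (algebraMap K A c) = Ideal.Quotient.mk I (MvPolynomial.C c) := rfl
  rw [this, evalQuot_mk]; simp

lemma evalQuot_surjective (x : Fin q → K)
    (hx : x ∈ {x | ∀ p ∈ I, MvPolynomial.eval x p = 0}) :
    Function.Surjective (evalQuot I x hx) :=
  fun c => ⟨algebraMap K A c, evalQuot_algebraMap I x hx c⟩

lemma evalQuot_ker_isMaximal (x : Fin q → K)
    (hx : x ∈ {x | ∀ p ∈ I, MvPolynomial.eval x p = 0}) :
    (RingHom.ker (evalQuot I x hx)).IsMaximal :=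
  RingHom.ker_isMaximal_of_surjective _ (evalQuot_surjective I x hx)

lemma evalQuot_ker_injective (x y : Fin q → K)
    (hx : x ∈ {x | ∀ p ∈ I, MvPolynomial.eval x p = 0})
    (hy : y ∈ {x | ∀ p ∈ I, MvPolynomial.eval x p = 0})
    (h : RingHom.ker (evalQuot I x hx) = RingHom.ker (evalQuot I y hy)) : x = y := by
  funext i
  have hmem : Ideal.Quotient.mk I (MvPolynomial.X i - MvPolynomial.C (x i))
      ∈ RingHom.ker (evalQuot I x hx) := by
    rw [RingHom.mem_ker, evalQuot_mk]; simp
  rw [h, RingHom.mem_ker, evalQuot_mk] at hmem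
  simp at hmem
  exact (sub_eq_zero.mp hmem).symm

lemma evalQuot_ker_surjective [IsAlgClosed K] [FiniteDimensional K A]
    (P : Ideal A) (hP : P.IsMaximal) :
    ∃ x hx, RingHom.ker (evalQuot I x hx) = P := by
  letI : Field (A ⧸ P) := Ideal.Quotient.field P
  haveI : Algebra.IsAlgebraic K (A ⧸ P) := Algebra.IsAlgebraic.of_finite K _
  have hbij : Function.Bijective (algebraMap K (A ⧸ P)) :=
    ⟨(algebraMap K (A ⧸ P)).injective,
      IsAlgClosed.algebraMap_bijective_of_isIntegral.2⟩
  let e : K ≃+* (A ⧸ P) := RingEquiv.ofBijective _ hbij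
  let χ : A →+* K := (e.symm : (A ⧸ P) →+* K).comp (Ideal.Quotient.mk P)
  have hχalg : ∀ c : K, χ (algebraMap K A c) = c := by
    intro c
    have h1 : (Ideal.Quotient.mk P) (algebraMap K A c) = algebraMap K (A ⧸ P) c := rfl
    show e.symm ((Ideal.Quotient.mk P) (algebraMap K A c)) = c
    rw [h1]
    exact e.symm_apply_apply c
  set x : Fin q → K := fun i => χ (Ideal.Quotient.mk I (MvPolynomial.X i)) with hxdef
  have key : ∀ p : MvPolynomial (Fin q) K,
      MvPolynomial.eval x p = χ (Ideal.Quotient.mk I p) := by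
    intro p
    have : (MvPolynomial.eval x : MvPolynomial (Fin q) K →+* K)
        = χ.comp (Ideal.Quotient.mk I : MvPolynomial (Fin q) K →+* A) := by
      apply MvPolynomial.ringHom_ext
      · intro c
        simp only [MvPolynomial.eval_C, RingHom.comp_apply]
        exact (hχalg c).symm
      · intro i
        simp [hxdef]
    exact congrFun (congrArg (fun g : MvPolynomial (Fin q) K →+* K => ⇑g) this) p
  have hx : x ∈ {x | ∀ p ∈ I, MvPolynomial.eval x p = 0} := by
    intro p hp
    rw [key p, Ideal.Quotient.eq_zero_iff_mem.mpr hp, map_zero]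
  refine ⟨x, hx, ?_⟩
  have heq : (evalQuot I x hx : A →+* K) = χ := by
    apply RingHom.ext
    intro a
    obtain ⟨p, rfl⟩ := Ideal.Quotient.mk_surjective a
    rw [evalQuot_mk, key p]
  rw [heq]
  ext a
  simp only [RingHom.mem_ker, RingHom.comp_apply, χ]
  constructor
  · intro h
    exact Ideal.Quotient.eq_zero_iff_mem.mp (e.symm.injective (by simpa using h))
  · intro h
    rw [Ideal.Quotient.eq_zero_iff_mem.mpr h, map_zero]

lemma prime_isMaximal [FiniteDimensional K A] (P : Ideal A) (hP : P.IsPrime) : P.IsMaximal := by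
  have : IsField (A ⧸ P) := isField_of_isIntegral_of_isField' (R := K) (S := A ⧸ P) (Field.toIsField K)
  exact Ideal.Quotient.maximal_of_isField P this

lemma aux_nilpotent_pow {S : Type*} [Ring S] {a b : S} (h : Commute a b)
    (hn : IsNilpotent (a - b)) (j : ℕ) : IsNilpotent (a ^ j - b ^ j) := by
  rw [← h.geom_sum₂_mul j]
  refine Commute.isNilpotent_mul_left ?_ hn
  have ha : Commute a (a - b) := (Commute.refl a).sub_right h
  have hb : Commute b (a - b) := h.symm.sub_right (Commute.refl b)
  exact Commute.sum_left _ _ _ fun i _ => ((ha.pow_left _).mul_left (hb.pow_left _))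

lemma localMultiplicity_eq [FiniteDimensional K A]
    (x : Fin q → K) (hx : x ∈ {x | ∀ p ∈ I, MvPolynomial.eval x p = 0})
    (k : ℕ) (hk : 0 < k) (e : A)
    (he1 : Ideal.Quotient.mk ((RingHom.ker (evalQuot I x hx)) ^ k) e = 1)
    (he0 : ∀ z ∈ (RingHom.ker (evalQuot I x hx)) ^ k, e * z = 0) :
    localMultiplicity I x hx =
      Module.finrank K (A ⧸ (RingHom.ker (evalQuot I x hx)) ^ k) := by
  set m := RingHom.ker (evalQuot I x hx) with hm
  set Q := m ^ k with hQ
  haveI hmax : m.IsMaximal := evalQuot_ker_isMaximal I x hx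
  have hQm : Q ≤ m := Ideal.pow_le_self hk.ne'
  have he_not : e ∈ m.primeCompl := by
    intro hem
    have h1e : (1 : A) - e ∈ Q := by
      rw [← Ideal.Quotient.eq_zero_iff_mem, map_sub, he1, map_one, sub_self]
    have : (1 : A) ∈ m := by
      have := m.add_mem (hQm h1e) hem
      simpa using this
    exact hmax.ne_top (Ideal.eq_top_iff_one m |>.mpr this)
  haveI hloc : IsLocalization m.primeCompl (A ⧸ Q) := by
    refine (isLocalization_iff _ _).mpr ⟨?_, ?_, ?_⟩
    · rintro ⟨s, hs⟩
      obtain ⟨y, i, him, hyi⟩ := hmax.exists_inv hs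
      have hnil : IsNilpotent (Ideal.Quotient.mk Q i) := by
        refine ⟨k, ?_⟩
        rw [← map_pow, Ideal.Quotient.eq_zero_iff_mem]
        exact Ideal.pow_mem_pow him k
      have hunit : IsUnit (Ideal.Quotient.mk Q (y * s)) := by
        have : Ideal.Quotient.mk Q (y * s) = 1 - Ideal.Quotient.mk Q i := by
          rw [eq_sub_iff_add_eq, ← map_add, hyi, map_one]
        rw [this]
        exact hnil.isUnit_one_sub
      rw [map_mul] at hunit
      rw [Ideal.Quotient.algebraMap_eq]
      exact isUnit_of_mul_isUnit_right hunit
    · intro z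
      obtain ⟨a, rfl⟩ := Ideal.Quotient.mk_surjective z
      exact ⟨(a, 1), by simp [Ideal.Quotient.algebraMap_eq]⟩
    · intro a b hab
      refine ⟨⟨e, he_not⟩, ?_⟩
      rw [Ideal.Quotient.algebraMap_eq] at hab
      have hsub : a - b ∈ Q := Ideal.Quotient.eq.mp hab
      have := he0 _ hsub
      rw [mul_sub, sub_eq_zero] at this
      simpa using this
  letI algK : Algebra K (Localization.AtPrime m) :=
    ((algebraMap A (Localization.AtPrime m)).comp (algebraMap K A)).toAlgebra
  have halgmap : algebraMap K (Localization.AtPrime m) =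
      (algebraMap A (Localization.AtPrime m)).comp (algebraMap K A) :=
    RingHom.algebraMap_toAlgebra _
  let ψ : Localization.AtPrime m ≃ₐ[A] (A ⧸ Q) :=
    IsLocalization.algEquiv m.primeCompl (Localization.AtPrime m) (A ⧸ Q)
  let E : Localization.AtPrime m ≃ₗ[K] (A ⧸ Q) :=
    { ψ.toRingEquiv.toAddEquiv with
      map_smul' := fun c v => by
        show ψ (c • v) = c • ψ v
        induction v using Localization.induction_on with
        | H p =>
          obtain ⟨a, s⟩ := p
          rw [Localization.smul_mk, Localization.mk_eq_mk',
            IsLocalization.algEquiv_mk', IsLocalization.algEquiv_mk',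
            Algebra.smul_def c a, ← IsLocalization.mul_mk'_eq_mk'_of_mul,
            Algebra.smul_def c, IsScalarTower.algebraMap_apply K (MvPolynomial (Fin q) K ⧸ I)
              ((MvPolynomial (Fin q) K ⧸ I) ⧸ Q)] }
  unfold localMultiplicity
  exact LinearEquiv.finrank_eq E

lemma inf_le_prod_of_coprime {R : Type*} [CommRing R] {ι : Type*} [DecidableEq ι]
    {Q : ι → Ideal R} (s : Finset ι) (h : Set.Pairwise s (Function.onFun IsCoprime Q)) :
    (⨅ i ∈ s, Q i) ≤ ∏ i ∈ s, Q i := by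
  induction s using Finset.induction with
  | empty => simp
  | @insert a s ha ih =>
    have hcop : IsCoprime (Q a) (∏ i ∈ s, Q i) :=
      IsCoprime.prod_right fun j hj =>
        h (Finset.mem_insert_self a s) (Finset.mem_insert_of_mem hj)
          (by rintro rfl; exact ha hj)
    rw [Finset.prod_insert ha, Ideal.mul_eq_inf_of_coprime hcop.sup_eq]
    have : (⨅ i ∈ insert a s, Q i) = Q a ⊓ ⨅ i ∈ s, Q i := by
      rw [← Finset.iInf_insert]
    rw [this]
    exact inf_le_inf_left _ (ih (h.mono (Finset.subset_insert a s)))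

end Aux

/-- Stickelberger trace formula: for a zero-dimensional ideal `I` with finite zero
set `Z̄` (points `x` with multiplicities `μ(x)`), the trace of multiplication by
`f^j` on `A = K[X₁,…,X_q]/I` equals `∑_{x ∈ Z̄} μ(x)·f(x)^j`. -/
theorem stmt17 {K : Type*} [Field K] [IsAlgClosed K] [CharZero K] {q : ℕ}
    (I : Ideal (MvPolynomial (Fin q) K))
    [FiniteDimensional K (MvPolynomial (Fin q) K ⧸ I)]
    (hfin : {x : Fin q → K | ∀ p ∈ I, MvPolynomial.eval x p = 0}.Finite)
    (f : MvPolynomial (Fin q) K ⧸ I) (j : ℕ) :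
    LinearMap.trace K (MvPolynomial (Fin q) K ⧸ I) (LinearMap.mulLeft K (f ^ j)) =
      ∑ x ∈ hfin.toFinset.attach,
        (localMultiplicity I x.1 (hfin.mem_toFinset.mp x.2) : K) *
          (evalQuot I x.1 (hfin.mem_toFinset.mp x.2) f) ^ j := by
  classical
  let A := MvPolynomial (Fin q) K ⧸ I
  obtain ⟨n, hn⟩ := IsNoetherianRing.isNilpotent_nilradical A
  set k := n + 1 with hkdef
  have hkpos : 0 < k := n.succ_pos
  have hnilk : nilradical A ^ k = ⊥ := by
    rw [pow_succ, hn, zero_mul]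
    rfl
  -- index type
  let ι := {x : Fin q → K // x ∈ hfin.toFinset}
  let m : ι → Ideal A := fun i => RingHom.ker (evalQuot I i.1 (hfin.mem_toFinset.mp i.2))
  have hmax : ∀ i, (m i).IsMaximal := fun i =>
    evalQuot_ker_isMaximal I i.1 (hfin.mem_toFinset.mp i.2)
  have hminj : Function.Injective m := fun i j h =>
    Subtype.ext (evalQuot_ker_injective I i.1 j.1 _ _ h)
  let Q : ι → Ideal A := fun i => (m i) ^ k
  have hQcop : Pairwise (Function.onFun IsCoprime Q) := fun i j hij =>
    (Ideal.isCoprime_iff_sup_eq.mpr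
      ((hmax i).coprime_of_ne (hmax j) fun h => hij (hminj h))).pow
  have hprime_eq : ∀ P : Ideal A, P.IsPrime → ∃ i, m i = P := by
    intro P hP
    obtain ⟨x, hx, hker⟩ := evalQuot_ker_surjective I P (prime_isMaximal I P hP)
    exact ⟨⟨x, hfin.mem_toFinset.mpr hx⟩, hker⟩
  have hiInfQ : (⨅ i, Q i) = ⊥ := by
    refine le_bot_iff.mp ?_
    have h1 : (⨅ i, Q i) ≤ ∏ i, Q i := by
      have := inf_le_prod_of_coprime (Q := Q) Finset.univ
        (fun a _ b _ hab => hQcop hab)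
      simpa using this
    have h2 : (∏ i, Q i : Ideal A) = (∏ i, m i) ^ k := by
      rw [← Finset.prod_pow]
    have h3 : (∏ i, m i : Ideal A) ≤ nilradical A := by
      rw [nilradical_eq_sInf]
      refine le_sInf ?_
      rintro P hP
      obtain ⟨i, rfl⟩ := hprime_eq P hP
      exact le_trans Ideal.prod_le_inf (Finset.inf_le (Finset.mem_univ i))
    calc (⨅ i, Q i) ≤ ∏ i, Q i := h1
      _ = (∏ i, m i) ^ k := h2
      _ ≤ nilradical A ^ k := Ideal.pow_right_mono h3 k
      _ = ⊥ := hnilk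
  -- idempotent-like elements
  let J : ι → Ideal A := fun i => ⨅ j ∈ Finset.univ.erase i, Q j
  have hJQle : ∀ i j : ι, j ≠ i → J j ≤ Q i := fun i j hji =>
    iInf₂_le i (Finset.mem_erase.mpr ⟨fun h => hji h.symm, Finset.mem_univ i⟩)
  have he : ∀ i, ∃ e, e ∈ J i ∧ Ideal.Quotient.mk (Q i) e = 1 := by
    intro i
    have hcop : IsCoprime (Q i) (J i) :=
      Ideal.isCoprime_biInf fun j hj =>
        hQcop (fun h => (Finset.mem_erase.mp hj).1 h.symm)
    obtain ⟨u, hu, v, hv, huv⟩ := Ideal.isCoprime_iff_exists.mp hcop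
    refine ⟨v, hv, ?_⟩
    have hv1 : v - 1 = -u := by rw [← huv]; ring
    have h1 : Ideal.Quotient.mk (Q i) v = Ideal.Quotient.mk (Q i) 1 :=
      Ideal.Quotient.eq.mpr (by rw [hv1]; exact neg_mem hu)
    simpa using h1
  choose e he1 he2 using he
  have hJQ : ∀ i, J i ⊓ Q i = ⊥ := by
    intro i
    refine le_bot_iff.mp ?_
    rw [← hiInfQ]
    refine le_iInf fun l => ?_
    by_cases hl : l = i
    · subst hl; exact inf_le_right
    · exact le_trans inf_le_left (hJQle l i (Ne.symm hl))
  -- the submodule decomposition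
  let N : ι → Submodule K A := fun i => Submodule.restrictScalars K (J i)
  have hmemN : ∀ (i : ι) (a : A), a ∈ N i ↔ a ∈ J i := fun i a => Iff.rfl
  have hindep : iSupIndep N := by
    intro i
    rw [Submodule.disjoint_def]
    intro a haN hasup
    have hsub : (⨆ l ∈ ({i}ᶜ : Set ι), N l) ≤ Submodule.restrictScalars K (Q i) := by
      refine iSup₂_le fun l hl => ?_
      intro z hz
      exact hJQle i l hl hz
    have : a ∈ J i ⊓ Q i := ⟨haN, hsub hasup⟩
    rw [hJQ i] at this
    exact this
  have hsup : (⨆ i, N i) = ⊤ := by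
    rw [eq_top_iff]
    intro a _
    have hmem : a - ∑ l, a * e l ∈ ⨅ l, Q l := by
      refine Submodule.mem_iInf _ |>.mpr fun i => ?_
      have : Ideal.Quotient.mk (Q i) (∑ l, a * e l) = Ideal.Quotient.mk (Q i) a := by
        rw [map_sum, Finset.sum_eq_single i]
        · rw [map_mul, he2 i, mul_one]
        · intro l _ hl
          rw [map_mul, Ideal.Quotient.eq_zero_iff_mem.mpr (hJQle i l hl (he1 l)), mul_zero]
        · intro h; exact absurd (Finset.mem_univ i) h
      rw [← Ideal.Quotient.eq_zero_iff_mem, map_sub, this, sub_self]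
    rw [hiInfQ] at hmem
    have ha : a = ∑ l, a * e l := sub_eq_zero.mp ((Submodule.mem_bot A).mp hmem)
    rw [ha]
    exact Submodule.sum_mem _ fun l _ =>
      Submodule.mem_iSup_of_mem l (Ideal.mul_mem_left _ a (he1 l))
  have hds : DirectSum.IsInternal N :=
    DirectSum.isInternal_submodule_of_iSupIndep_of_iSup_eq_top hindep hsup
  have hmt1 : ∀ i, ∀ x ∈ N i, LinearMap.mulLeft K f x ∈ N i := fun i a ha => by
    simpa only [SetLike.mem_coe, hmemN, Submodule.restrictScalars_mem, LinearMap.mulLeft_apply] using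
      Ideal.mul_mem_left (J i) f ha
  have hmtj : ∀ i, ∀ x ∈ N i, LinearMap.mulLeft K (f ^ j) x ∈ N i := fun i a ha => by
    simpa only [SetLike.mem_coe, hmemN, Submodule.restrictScalars_mem, LinearMap.mulLeft_apply] using
      Ideal.mul_mem_left (J i) (f ^ j) ha
  rw [LinearMap.trace_eq_sum_trace_restrict hds hmtj, Finset.attach_eq_univ]
  refine Finset.sum_congr rfl fun i _ => ?_
  set c := evalQuot I i.1 (hfin.mem_toFinset.mp i.2) f with hc
  set g := (LinearMap.mulLeft K f).restrict (hmt1 i) with hg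
  have hres : (LinearMap.mulLeft K (f ^ j)).restrict (hmtj i) = g ^ j := by
    erw [hg, Module.End.pow_restrict]
    exact LinearMap.ext fun v => Subtype.ext (by
      simp [LinearMap.restrict_apply, LinearMap.pow_mulLeft])
  have hfc : f - algebraMap K A c ∈ m i := by
    rw [RingHom.mem_ker, map_sub, evalQuot_algebraMap]
    exact sub_eq_zero.mpr hc.symm
  have hmt2 : ∀ x ∈ N i, LinearMap.mulLeft K (f - algebraMap K A c) x ∈ N i :=
    fun a ha => by
      simpa only [SetLike.mem_coe, hmemN, Submodule.restrictScalars_mem, LinearMap.mulLeft_apply] using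
        Ideal.mul_mem_left (J i) _ ha
  have hgc : g - algebraMap K (Module.End K (N i)) c
      = (LinearMap.mulLeft K (f - algebraMap K A c)).restrict hmt2 := by
    refine LinearMap.ext fun v => Subtype.ext ?_
    simp only [hg, LinearMap.sub_apply, LinearMap.restrict_apply, LinearMap.mulLeft_apply,
      Module.algebraMap_end_apply, Submodule.coe_sub, SetLike.val_smul, sub_mul]
    change f * (v : A) - c • (v : A) = _
    rw [← algebraMap_smul A c (v : A), smul_eq_mul]
  have hnilgc : IsNilpotent (g - algebraMap K (Module.End K (N i)) c) := by
    refine ⟨k, ?_⟩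
    erw [hgc, Module.End.pow_restrict]
    refine LinearMap.ext fun v => Subtype.ext ?_
    have hpow : (f - algebraMap K A c) ^ k ∈ Q i := Ideal.pow_mem_pow hfc k
    have hz : (f - algebraMap K A c) ^ k * (v : A) ∈ J i ⊓ Q i :=
      ⟨Ideal.mul_mem_left _ _ v.2, Ideal.mul_mem_right _ _ hpow⟩
    rw [hJQ i] at hz
    rw [LinearMap.restrict_coe_apply, LinearMap.pow_mulLeft, LinearMap.mulLeft_apply,
      LinearMap.zero_apply, ZeroMemClass.coe_zero]
    exact (Submodule.mem_bot A).mp hz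
  have hcomm : Commute g (algebraMap K (Module.End K (N i)) c) :=
    Algebra.commute_algebraMap_right c g
  have hnilj : IsNilpotent (g ^ j - algebraMap K (Module.End K (N i)) (c ^ j)) := by
    have h := aux_nilpotent_pow (S := Module.End K (N i)) hcomm hnilgc j
    rwa [← map_pow] at h
  have htr : LinearMap.trace K (N i) ((LinearMap.mulLeft K (f ^ j)).restrict (hmtj i))
      = (Module.finrank K (N i) : K) * c ^ j := by
    rw [hres]
    have h1 : g ^ j = (1 : Module.End K (N i)) ∘ₗ g ^ j := by
      rw [Module.End.one_eq_id, LinearMap.id_comp]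
    rw [h1, LinearMap.trace_comp_eq_mul_of_commute_of_isNilpotent (c ^ j)
      (Commute.one_left _) hnilj, LinearMap.trace_one]
    ring
  have he0 : ∀ z ∈ Q i, e i * z = 0 := by
    intro z hz
    have hmem : e i * z ∈ J i ⊓ Q i :=
      ⟨Ideal.mul_mem_right _ _ (he1 i), Ideal.mul_mem_left _ _ hz⟩
    rw [hJQ i] at hmem
    exact (Submodule.mem_bot A).mp hmem
  have hmult : localMultiplicity I i.1 (hfin.mem_toFinset.mp i.2) = Module.finrank K (N i) := by
    rw [localMultiplicity_eq I i.1 (hfin.mem_toFinset.mp i.2) k hkpos (e i) (he2 i) he0]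
    have hbij : Function.Bijective
        ((Ideal.Quotient.mkₐ K (Q i)).toLinearMap ∘ₗ (N i).subtype) := by
      constructor
      · intro a b hab
        have hsub : (a : A) - (b : A) ∈ Q i := Ideal.Quotient.eq.mp hab
        have hJ : (a : A) - (b : A) ∈ J i := sub_mem a.2 b.2
        have : (a : A) - (b : A) ∈ J i ⊓ Q i := ⟨hJ, hsub⟩
        rw [hJQ i] at this
        exact Subtype.ext (sub_eq_zero.mp ((Submodule.mem_bot A).mp this))
      · intro b
        obtain ⟨a, rfl⟩ := Ideal.Quotient.mk_surjective b
        refine ⟨⟨a * e i, Ideal.mul_mem_left (J i) a (he1 i)⟩, ?_⟩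
        show Ideal.Quotient.mk (Q i) (a * e i) = Ideal.Quotient.mk (Q i) a
        rw [map_mul, he2 i, mul_one]
    exact (LinearEquiv.finrank_eq (LinearEquiv.ofBijective
      ((Ideal.Quotient.mkₐ K (Q i)).toLinearMap ∘ₗ (N i).subtype) hbij)).symm
  rw [htr, hmult]
end
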